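/- arXiv:2409.17551 — 3 statements merged into one kernel-verified Lean document; each statement's English description precedes it below -/
import Mathlib

section
/- Let R be a polynomial ring over a field k with graded maximal ideal m, and let I ⊆ m² be a non-zero proper monomial ideal that is unmixed, i.e., Ass(R/I) = Min(R/I). Then for every integer s ≥ 1, the maximal degree d(I^{(s)}) of a minimal monomial generator of I^{(s)} satisfies d(I^{(s)}) ≥ max{2, d(√I)}·s, where d(√I) is the maximal degree of a minimal monomial generator of the radical √I. -/
/- STATEMENT 16: R a polynomial ring over a field k with graded maximal ideal m,
I ⊆ m² a non-zero proper unmixed monomial ideal (Ass(R/I) = Min(R/I)). Then for every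
s ≥ 1, the maximal degree of a minimal monomial generator of I^{(s)} satisfies
d(I^{(s)}) ≥ max{2, d(√I)}·s. -/

open MvPolynomial

noncomputable section

/-- The graded maximal ideal of a polynomial ring, generated by the variables. -/
def mxI (k : Type*) [Field k] (σ : Type*) : Ideal (MvPolynomial σ k) :=
  Ideal.span (Set.range MvPolynomial.X)

/-- A monomial ideal: an ideal generated by monomials. -/
def IsMonomialIdeal {k : Type*} [Field k] {σ : Type*} (I : Ideal (MvPolynomial σ k)) : Prop :=
  ∃ G : Set (σ →₀ ℕ), I = Ideal.span ((fun d => (monomial d (1 : k) : MvPolynomial σ k)) '' G)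

/-- The maximal degree of a minimal monomial generator of a monomial ideal `I`:
a monomial of `I` is a minimal generator iff it does not lie in `m·I`. -/
def maxGenDeg {k : Type*} [Field k] {σ : Type*} (I : Ideal (MvPolynomial σ k)) : ℕ :=
  sSup {n : ℕ | ∃ d : σ →₀ ℕ, (monomial d (1 : k) : MvPolynomial σ k) ∈ I ∧
    (monomial d (1 : k) : MvPolynomial σ k) ∉ mxI k σ * I ∧ n = d.sum fun _ e => e}

/-- The `s`-th symbolic power of an ideal `a`: the intersection over all associated primes `P`
of `A ⧸ a` of the contraction of `a ^ s` extended to the localization at `P`. -/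
def symbPow {A : Type*} [CommRing A] (a : Ideal A) (s : ℕ) : Ideal A :=
  sInf { J : Ideal A | ∃ (P : Ideal A) (hP : P ∈ associatedPrimes A (A ⧸ a)),
      haveI : P.IsPrime := IsAssociatedPrime.isPrime hP
      J = (Ideal.map (algebraMap A (Localization.AtPrime P)) (a ^ s)).comap
            (algebraMap A (Localization.AtPrime P)) }

open scoped Classical Pointwise

namespace SP16

variable {k : Type*} [Field k] {a : ℕ}

/-- sum of exponents over a set of variables -/
def degF (F : Set (Fin a)) (d : Fin a →₀ ℕ) : ℕ := ∑ i : Fin a, if i ∈ F then d i else 0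

/-- total degree of an exponent vector -/
def tdeg (d : Fin a →₀ ℕ) : ℕ := d.sum fun _ e => e

lemma tdeg_eq_sum (d : Fin a →₀ ℕ) : tdeg d = ∑ i : Fin a, d i := by
  rw [tdeg, Finsupp.sum_fintype]; intro; rfl

lemma degF_add (F : Set (Fin a)) (d e : Fin a →₀ ℕ) :
    degF F (d + e) = degF F d + degF F e := by
  simp only [degF, Finsupp.add_apply, ← Finset.sum_add_distrib]
  congr 1; ext i; split <;> simp

lemma degF_mono {F : Set (Fin a)} {d e : Fin a →₀ ℕ} (h : d ≤ e) :
    degF F d ≤ degF F e := by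
  apply Finset.sum_le_sum
  intro i _
  split
  · exact h i
  · exact le_rfl

lemma degF_le_tdeg (F : Set (Fin a)) (d : Fin a →₀ ℕ) : degF F d ≤ tdeg d := by
  rw [tdeg_eq_sum]
  apply Finset.sum_le_sum
  intro i _; split <;> simp

lemma degF_univ (d : Fin a →₀ ℕ) : degF Set.univ d = tdeg d := by
  rw [degF, tdeg_eq_sum]; simp

lemma degF_single (F : Set (Fin a)) (i : Fin a) (n : ℕ) :
    degF F (Finsupp.single i n) = if i ∈ F then n else 0 := by
  rw [degF]
  rw [Finset.sum_eq_single i]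
  · simp
  · intro j _ hj; simp [Finsupp.single_apply, Ne.symm hj]
  · simp

lemma degF_eq_zero_iff {F : Set (Fin a)} {d : Fin a →₀ ℕ} :
    degF F d = 0 ↔ ∀ i ∈ F, d i = 0 := by
  rw [degF, Finset.sum_eq_zero_iff]
  constructor
  · intro h i hi
    have := h i (Finset.mem_univ i)
    simpa [hi] using this
  · intro h i _
    split
    · exact h i ‹_›
    · rfl

lemma one_le_degF_iff {F : Set (Fin a)} {d : Fin a →₀ ℕ} :
    1 ≤ degF F d ↔ ∃ i ∈ F, 1 ≤ d i := by
  rw [Nat.one_le_iff_ne_zero, Ne, degF_eq_zero_iff]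
  push_neg
  simp [Nat.one_le_iff_ne_zero]

lemma degF_smul (F : Set (Fin a)) (n : ℕ) (d : Fin a →₀ ℕ) :
    degF F (n • d) = n * degF F d := by
  induction n with
  | zero => simp [degF]
  | succ m ih => rw [succ_nsmul, degF_add, ih, add_mul, one_mul]

lemma tdeg_add (d e : Fin a →₀ ℕ) : tdeg (d + e) = tdeg d + tdeg e := by
  simp only [← degF_univ]; exact degF_add _ _ _

lemma tdeg_eq_zero_iff {d : Fin a →₀ ℕ} : tdeg d = 0 ↔ d = 0 := by
  rw [← degF_univ, degF_eq_zero_iff]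
  constructor
  · intro h; ext i; exact h i trivial
  · intro h i _; simp [h]

lemma exists_single_le_of_ne_zero {d : Fin a →₀ ℕ} (h : d ≠ 0) :
    ∃ i, Finsupp.single i 1 ≤ d := by
  obtain ⟨i, hi⟩ := Finsupp.ne_iff.1 h
  refine ⟨i, ?_⟩
  intro j
  rcases eq_or_ne j i with rfl | hji
  · simpa [Finsupp.single_apply, Nat.one_le_iff_ne_zero] using hi
  · simp [Finsupp.single_apply, Ne.symm hji]

lemma tdeg_eq_one {d : Fin a →₀ ℕ} (h : tdeg d = 1) : ∃ i, d = Finsupp.single i 1 := by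
  have hne : d ≠ 0 := by intro h0; rw [h0] at h; simp [tdeg] at h
  obtain ⟨i, hi⟩ := exists_single_le_of_ne_zero hne
  refine ⟨i, ?_⟩
  have hle : Finsupp.single i 1 ≤ d := hi
  have h2 : tdeg (d - Finsupp.single i 1) + tdeg (Finsupp.single i 1) = tdeg d := by
    rw [← tdeg_add, tsub_add_cancel_of_le hle]
  have h3 : tdeg (Finsupp.single i 1) = 1 := by
    rw [tdeg_eq_sum, Finset.sum_eq_single i]
    · simp
    · intro j _ hj; simp [Finsupp.single_apply, Ne.symm hj]
    · simp
  rw [h, h3] at h2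
  have h4 : d - Finsupp.single i 1 = 0 := by
    rw [← tdeg_eq_zero_iff]; omega
  have := tsub_add_cancel_of_le hle
  rw [h4, zero_add] at this
  exact this.symm


/-- The ideal of polynomials all of whose monomials have `degF F ≥ n`. -/
def pfp (F : Set (Fin a)) (n : ℕ) : Ideal (MvPolynomial (Fin a) k) where
  carrier := {p | ∀ d ∈ p.support, n ≤ degF F d}
  zero_mem' := by simp
  add_mem' := by
    intro p q hp hq d hd
    rcases Finset.mem_union.1 (Finsupp.support_add hd) with h | h
    · exact hp d h
    · exact hq d h
  smul_mem' := by
    intro c p hp d hd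
    rw [smul_eq_mul] at hd
    have := MvPolynomial.support_mul c p hd
    rw [Finset.mem_add] at this
    obtain ⟨d1, hd1, d2, hd2, rfl⟩ := this
    calc n ≤ degF F d2 := hp d2 hd2
    _ ≤ degF F (d1 + d2) := by rw [degF_add]; omega

lemma mem_pfp_iff {F : Set (Fin a)} {n : ℕ} {p : MvPolynomial (Fin a) k} :
    p ∈ pfp F n ↔ ∀ d ∈ p.support, n ≤ degF F d := Iff.rfl

lemma monomial_mem_pfp {F : Set (Fin a)} {n : ℕ} {d : Fin a →₀ ℕ} :
    (monomial d (1 : k)) ∈ pfp F n ↔ n ≤ degF F d := by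
  rw [mem_pfp_iff, support_monomial, if_neg (one_ne_zero)]
  simp

lemma pfp_mul_le {F : Set (Fin a)} {m n : ℕ} :
    (pfp F m : Ideal (MvPolynomial (Fin a) k)) * pfp F n ≤ pfp F (m + n) := by
  rw [Ideal.mul_le]
  intro p hp q hq d hd
  have := MvPolynomial.support_mul p q hd
  rw [Finset.mem_add] at this
  obtain ⟨d1, hd1, d2, hd2, rfl⟩ := this
  rw [degF_add]
  exact add_le_add (hp d1 hd1) (hq d2 hd2)

lemma pfp_pow_le {F : Set (Fin a)} {m s : ℕ} (hs : 1 ≤ s) :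
    (pfp F m : Ideal (MvPolynomial (Fin a) k)) ^ s ≤ pfp F (m * s) := by
  induction s with
  | zero => omega
  | succ t ih =>
    rcases Nat.eq_or_lt_of_le hs with h | h
    · simp [← h, pow_one]
    · have ht : 1 ≤ t := by omega
      calc (pfp F m : Ideal (MvPolynomial (Fin a) k)) ^ (t + 1) = pfp F m ^ t * pfp F m := by
            rw [pow_succ]
      _ ≤ pfp F (m * t) * pfp F m := Ideal.mul_mono (ih ht) le_rfl
      _ ≤ pfp F (m * t + m) := pfp_mul_le
      _ = pfp F (m * (t + 1)) := by ring_nf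

/-- monomial ideals are up-closed on monomials -/
lemma monomial_mem_of_le {A : Ideal (MvPolynomial (Fin a) k)} {d d' : Fin a →₀ ℕ}
    (h : monomial d (1 : k) ∈ A) (hle : d ≤ d') : monomial d' (1 : k) ∈ A := by
  have : (monomial (d' - d) (1 : k)) * monomial d (1 : k) = monomial d' (1 : k) := by
    rw [monomial_mul, one_mul, tsub_add_cancel_of_le hle]
  rw [← this]
  exact Ideal.mul_mem_left _ _ h

/-- a "monomial-criterion" ideal: membership implies all monomials belong -/
def IsMonCrit (A : Ideal (MvPolynomial (Fin a) k)) : Prop :=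
  ∀ p ∈ A, ∀ d ∈ p.support, (monomial d (1 : k)) ∈ A

lemma isMonCrit_of_span {G : Set (Fin a →₀ ℕ)} :
    IsMonCrit (Ideal.span ((fun d => (monomial d (1 : k))) '' G)) := by
  intro p hp d hd
  obtain ⟨g, hg, hgle⟩ := mem_ideal_span_monomial_image.1 hp d hd
  exact monomial_mem_of_le (Ideal.subset_span ⟨g, hg, rfl⟩) hgle

lemma IsMonCrit.span_eq {A : Ideal (MvPolynomial (Fin a) k)} (hA : IsMonCrit A) :
    A = Ideal.span ((fun d => (monomial d (1 : k))) '' {d | (monomial d (1 : k)) ∈ A}) := by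
  apply le_antisymm
  · intro p hp
    rw [mem_ideal_span_monomial_image]
    intro d hd
    exact ⟨d, hA p hp d hd, le_rfl⟩
  · rw [Ideal.span_le]
    rintro x ⟨g, hg, rfl⟩
    exact hg

lemma isMonCrit_pfp {F : Set (Fin a)} {n : ℕ} : IsMonCrit (pfp F n : Ideal (MvPolynomial (Fin a) k)) := by
  intro p hp d hd
  rw [monomial_mem_pfp]
  exact hp d hd

lemma isMonCrit_top : IsMonCrit (⊤ : Ideal (MvPolynomial (Fin a) k)) := by
  intro p _ d _; trivial

lemma mul_span_eq {A B : Ideal (MvPolynomial (Fin a) k)} (hA : IsMonCrit A) (hB : IsMonCrit B) :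
    A * B = Ideal.span ((fun d => (monomial d (1 : k))) ''
      ({d | (monomial d (1 : k)) ∈ A} + {d | (monomial d (1 : k)) ∈ B})) := by
  apply le_antisymm
  · rw [Ideal.mul_le]
    intro p hp q hq
    rw [mem_ideal_span_monomial_image]
    intro d hd
    have := MvPolynomial.support_mul p q hd
    rw [Finset.mem_add] at this
    obtain ⟨d1, hd1, d2, hd2, rfl⟩ := this
    exact ⟨d1 + d2, Set.add_mem_add (hA p hp d1 hd1) (hB q hq d2 hd2), le_rfl⟩
  · rw [Ideal.span_le]
    rintro x ⟨g, hg, rfl⟩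
    rw [Set.mem_add] at hg
    obtain ⟨d1, hd1, d2, hd2, rfl⟩ := hg
    have := Ideal.mul_mem_mul hd1 hd2
    rwa [monomial_mul, one_mul] at this

lemma IsMonCrit.mul {A B : Ideal (MvPolynomial (Fin a) k)} (hA : IsMonCrit A) (hB : IsMonCrit B) :
    IsMonCrit (A * B) := by
  rw [mul_span_eq hA hB]
  exact isMonCrit_of_span

lemma IsMonCrit.pow {A : Ideal (MvPolynomial (Fin a) k)} (hA : IsMonCrit A) (s : ℕ) :
    IsMonCrit (A ^ s) := by
  induction s with
  | zero => simpa using isMonCrit_top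
  | succ t ih => rw [pow_succ]; exact ih.mul hA

lemma monomial_mem_mul {A B : Ideal (MvPolynomial (Fin a) k)} (hA : IsMonCrit A) (hB : IsMonCrit B)
    {d : Fin a →₀ ℕ} :
    (monomial d (1 : k)) ∈ A * B ↔
      ∃ d1 d2, (monomial d1 (1 : k)) ∈ A ∧ (monomial d2 (1 : k)) ∈ B ∧ d1 + d2 ≤ d := by
  constructor
  · intro h
    rw [mul_span_eq hA hB, mem_ideal_span_monomial_image] at h
    obtain ⟨g, hg, hgle⟩ := h d (by rw [support_monomial, if_neg one_ne_zero]; simp)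
    rw [Set.mem_add] at hg
    obtain ⟨d1, hd1, d2, hd2, rfl⟩ := hg
    exact ⟨d1, d2, hd1, hd2, hgle⟩
  · rintro ⟨d1, d2, h1, h2, hle⟩
    have : (monomial (d1 + d2) (1 : k)) ∈ A * B := by
      have := Ideal.mul_mem_mul h1 h2
      rwa [monomial_mul, one_mul] at this
    exact monomial_mem_of_le this hle


section Survival

variable {F : Set (Fin a)}

/-- The part of `p` consisting of monomials of minimal `degF F`. -/
private def lowPart (F : Set (Fin a)) (p : MvPolynomial (Fin a) k) (m : ℕ) :
    MvPolynomial (Fin a) k :=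
  ∑ d ∈ p.support.filter (fun d => degF F d = m), monomial d (coeff d p)

private lemma coeff_lowPart (p : MvPolynomial (Fin a) k) (m : ℕ) (d : Fin a →₀ ℕ) :
    coeff d (lowPart F p m) =
      if d ∈ p.support.filter (fun d => degF F d = m) then coeff d p else 0 := by
  rw [lowPart]
  rw [coeff_sum]
  rw [← Finset.sum_ite_eq' (p.support.filter (fun d => degF F d = m)) d (fun d' => coeff d' p)]
  apply Finset.sum_congr rfl
  intro x _
  rw [coeff_monomial]

/-- Survival of the product of minimal-`degF` monomials. -/
lemma exists_add_mem_support_mul {p q : MvPolynomial (Fin a) k} (hp : p ≠ 0) (hq : q ≠ 0)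
    (F : Set (Fin a)) :
    ∃ dp dq, dp ∈ p.support ∧ dq ∈ q.support ∧
      (∀ d ∈ p.support, degF F dp ≤ degF F d) ∧ (∀ d ∈ q.support, degF F dq ≤ degF F d) ∧
      dp + dq ∈ (p * q).support := by
  have hps : p.support.Nonempty :=
    Finset.nonempty_iff_ne_empty.2 fun h => hp (MvPolynomial.support_eq_empty.1 h)
  have hqs : q.support.Nonempty :=
    Finset.nonempty_iff_ne_empty.2 fun h => hq (MvPolynomial.support_eq_empty.1 h)
  obtain ⟨d1, hd1, hmin1⟩ := (p.support).exists_min_image (degF F) hps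
  obtain ⟨d2, hd2, hmin2⟩ := (q.support).exists_min_image (degF F) hqs
  set m1 := degF F d1 with hm1
  set m2 := degF F d2 with hm2
  set lp := lowPart F p m1 with hlp
  set lq := lowPart F q m2 with hlq
  have hsupp_lp : lp.support ⊆ p.support.filter (fun d => degF F d = m1) := by
    intro d hd
    rw [MvPolynomial.mem_support_iff, hlp, coeff_lowPart] at hd
    by_contra h
    rw [if_neg h] at hd
    exact hd rfl
  have hsupp_lq : lq.support ⊆ q.support.filter (fun d => degF F d = m2) := by
    intro d hd
    rw [MvPolynomial.mem_support_iff, hlq, coeff_lowPart] at hd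
    by_contra h
    rw [if_neg h] at hd
    exact hd rfl
  have hlp0 : lp ≠ 0 := by
    intro h
    have hmem : d1 ∈ p.support.filter (fun d => degF F d = m1) :=
      Finset.mem_filter.2 ⟨hd1, hm1.symm⟩
    have : coeff d1 lp = coeff d1 p := by
      rw [hlp, coeff_lowPart, if_pos hmem]
    rw [h] at this
    simp only [coeff_zero] at this
    exact (MvPolynomial.mem_support_iff.1 hd1) this.symm
  have hlq0 : lq ≠ 0 := by
    intro h
    have hmem : d2 ∈ q.support.filter (fun d => degF F d = m2) :=
      Finset.mem_filter.2 ⟨hd2, hm2.symm⟩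
    have : coeff d2 lq = coeff d2 q := by
      rw [hlq, coeff_lowPart, if_pos hmem]
    rw [h] at this
    simp only [coeff_zero] at this
    exact (MvPolynomial.mem_support_iff.1 hd2) this.symm
  have key : ∀ d : Fin a →₀ ℕ, degF F d = m1 + m2 → coeff d (p * q) = coeff d (lp * lq) := by
    intro d hd
    rw [coeff_mul, coeff_mul]
    apply Finset.sum_congr rfl
    rintro ⟨i, j⟩ hij
    rw [Finset.HasAntidiagonal.mem_antidiagonal] at hij
    by_cases hi : coeff i p = 0
    · have : coeff i lp = 0 := by
        rw [hlp, coeff_lowPart]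
        split
        · exact hi
        · rfl
      simp [hi, this]
    · by_cases hj : coeff j q = 0
      · have : coeff j lq = 0 := by
          rw [hlq, coeff_lowPart]
          split
          · exact hj
          · rfl
        simp [hj, this]
      · have hi' : i ∈ p.support := MvPolynomial.mem_support_iff.2 hi
        have hj' : j ∈ q.support := MvPolynomial.mem_support_iff.2 hj
        have h1 : m1 ≤ degF F i := hmin1 i hi'
        have h2 : m2 ≤ degF F j := hmin2 j hj'
        have hadd : degF F i + degF F j = m1 + m2 := by rw [← degF_add, hij, hd]
        have e1 : degF F i = m1 := by omega
        have e2 : degF F j = m2 := by omega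
        have m1' : i ∈ p.support.filter (fun d => degF F d = m1) :=
          Finset.mem_filter.2 ⟨hi', e1⟩
        have m2' : j ∈ q.support.filter (fun d => degF F d = m2) :=
          Finset.mem_filter.2 ⟨hj', e2⟩
        have c1 : coeff i lp = coeff i p := by
          rw [hlp, coeff_lowPart, if_pos m1']
        have c2 : coeff j lq = coeff j q := by
          rw [hlq, coeff_lowPart, if_pos m2']
        rw [c1, c2]
  have hmul : lp * lq ≠ 0 := mul_ne_zero hlp0 hlq0
  obtain ⟨d0, hd0⟩ := Finset.nonempty_iff_ne_empty.2
    (fun h => hmul (MvPolynomial.support_eq_empty.1 h))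
  have := MvPolynomial.support_mul lp lq hd0
  rw [Finset.mem_add] at this
  obtain ⟨i, hi, j, hj, rfl⟩ := this
  have hi' := Finset.mem_filter.1 (hsupp_lp hi)
  have hj' := Finset.mem_filter.1 (hsupp_lq hj)
  refine ⟨i, j, hi'.1, hj'.1, ?_, ?_, ?_⟩
  · intro d hd; rw [hi'.2]; exact hmin1 d hd
  · intro d hd; rw [hj'.2]; exact hmin2 d hd
  · rw [MvPolynomial.mem_support_iff]
    rw [key (i + j) (by rw [degF_add, hi'.2, hj'.2])]
    exact MvPolynomial.mem_support_iff.1 hd0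

/-- The ideal generated by the variables in `F` is prime. -/
lemma pfp_one_isPrime (F : Set (Fin a)) : (pfp F 1 : Ideal (MvPolynomial (Fin a) k)).IsPrime := by
  constructor
  · rw [Ideal.ne_top_iff_one]
    intro h
    have := h 0 (by rw [show (1 : MvPolynomial (Fin a) k) = monomial 0 1 by simp [monomial_zero'],
      support_monomial, if_neg one_ne_zero]; simp)
    simp [degF] at this
  · intro p q hpq
    by_contra h
    push_neg at h
    obtain ⟨hp, hq⟩ := h
    rw [mem_pfp_iff] at hp hq
    push_neg at hp hq
    obtain ⟨da, hda, hda'⟩ := hp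
    obtain ⟨db, hdb, hdb'⟩ := hq
    have hp0 : p ≠ 0 := by intro h; rw [h] at hda; simp at hda
    have hq0 : q ≠ 0 := by intro h; rw [h] at hdb; simp at hdb
    obtain ⟨dp, dq, _, _, hminp, hminq, hmem⟩ := exists_add_mem_support_mul hp0 hq0 F
    have := hpq _ hmem
    have h1 : degF F dp = 0 := by have := hminp da hda; omega
    have h2 : degF F dq = 0 := by have := hminq db hdb; omega
    rw [degF_add, h1, h2] at this
    omega

end Survival


/-- Monomial saturation of `N` with respect to the variables outside `F`. -/
def SatF (F : Set (Fin a)) (N : Ideal (MvPolynomial (Fin a) k)) :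
    Ideal (MvPolynomial (Fin a) k) where
  carrier := {p | ∀ d ∈ p.support, ∃ e : Fin a →₀ ℕ, degF F e = 0 ∧
    (monomial (d + e) (1 : k)) ∈ N}
  zero_mem' := by simp
  add_mem' := by
    intro p q hp hq d hd
    rcases Finset.mem_union.1 (Finsupp.support_add hd) with h | h
    · exact hp d h
    · exact hq d h
  smul_mem' := by
    intro c p hp d hd
    rw [smul_eq_mul] at hd
    have := MvPolynomial.support_mul c p hd
    rw [Finset.mem_add] at this
    obtain ⟨d1, hd1, d2, hd2, rfl⟩ := this
    obtain ⟨e, he, hmem⟩ := hp d2 hd2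
    refine ⟨e, he, monomial_mem_of_le hmem ?_⟩
    intro i
    simp only [Finsupp.add_apply]
    omega

lemma mem_SatF_iff {F : Set (Fin a)} {N : Ideal (MvPolynomial (Fin a) k)}
    {p : MvPolynomial (Fin a) k} :
    p ∈ SatF F N ↔ ∀ d ∈ p.support, ∃ e : Fin a →₀ ℕ, degF F e = 0 ∧
      (monomial (d + e) (1 : k)) ∈ N := Iff.rfl

lemma monomial_mem_SatF_iff {F : Set (Fin a)} {N : Ideal (MvPolynomial (Fin a) k)}
    {d : Fin a →₀ ℕ} :
    (monomial d (1 : k)) ∈ SatF F N ↔ ∃ e : Fin a →₀ ℕ, degF F e = 0 ∧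
      (monomial (d + e) (1 : k)) ∈ N := by
  rw [mem_SatF_iff, support_monomial, if_neg one_ne_zero]
  simp

lemma isMonCrit_SatF {F : Set (Fin a)} {N : Ideal (MvPolynomial (Fin a) k)} :
    IsMonCrit (SatF F N) := by
  intro p hp d hd
  rw [monomial_mem_SatF_iff]
  exact hp d hd

lemma le_SatF {F : Set (Fin a)} {N : Ideal (MvPolynomial (Fin a) k)} (hN : IsMonCrit N) :
    N ≤ SatF F N := by
  intro p hp d hd
  exact ⟨0, by simp [degF], by simpa using hN p hp d hd⟩

lemma SatF_le_pfp {F : Set (Fin a)} {N : Ideal (MvPolynomial (Fin a) k)} {n : ℕ}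
    (hN : N ≤ pfp F n) : SatF F N ≤ pfp F n := by
  intro p hp d hd
  obtain ⟨e, he, hmem⟩ := hp d hd
  have := (monomial_mem_pfp).1 (hN hmem)
  rw [degF_add, he] at this
  omega

/-- KEY: multiplying by something outside the variable prime does not change `SatF` membership. -/
lemma SatF_of_mul_mem {F : Set (Fin a)} {N : Ideal (MvPolynomial (Fin a) k)}
    {t : MvPolynomial (Fin a) k} (ht : t ∉ (pfp F 1 : Ideal (MvPolynomial (Fin a) k)))
    {r : MvPolynomial (Fin a) k} (h : t * r ∈ SatF F N) : r ∈ SatF F N := by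
  have ht0 : t ≠ 0 := by intro h0; rw [h0] at ht; exact ht (Ideal.zero_mem _)
  obtain ⟨d0, hd0, hd0'⟩ : ∃ d ∈ t.support, degF F d = 0 := by
    by_contra hc
    push_neg at hc
    exact ht fun d hd => by have := hc d hd; omega
  -- strong induction on the size of the support of r
  generalize hn : r.support.card = n at *
  induction n using Nat.strong_induction_on generalizing r with
  | _ n ih =>
    rcases eq_or_ne r 0 with rfl | hr0
    · exact Ideal.zero_mem _
    · obtain ⟨dp, dq, hdp, hdq, hminp, _, hmem⟩ := exists_add_mem_support_mul ht0 hr0 F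
      have hdp0 : degF F dp = 0 := by have := hminp d0 hd0; omega
      -- the monomial dq of r is in SatF F N
      obtain ⟨e, he, hmem'⟩ := h _ hmem
      have hq_mem : (monomial dq (1 : k)) ∈ SatF F N := by
        rw [monomial_mem_SatF_iff]
        refine ⟨dp + e, by rw [degF_add, hdp0, he], ?_⟩
        have : dq + (dp + e) = dp + dq + e := by rw [← add_assoc, add_comm dq dp]
        rw [this]
        exact hmem'
      -- strip the monomial dq from r
      set r' := r - monomial dq (coeff dq r) with hr'
      have hmono : monomial dq (coeff dq r) ∈ SatF F N := by
        have := Ideal.mul_mem_left (SatF F N) (C (coeff dq r)) hq_mem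
        rwa [C_mul_monomial, mul_one] at this
      have hr'support : r'.support = r.support.erase dq := by
        ext d
        rcases eq_or_ne d dq with rfl | hne
        · simp [hr', MvPolynomial.mem_support_iff, coeff_sub, coeff_monomial]
        · simp only [Finset.mem_erase, hne, ne_eq, not_false_iff, true_and]
          simp [hr', MvPolynomial.mem_support_iff, coeff_sub, coeff_monomial, Ne.symm hne]
      have hcard : r'.support.card < n := by
        rw [hr'support, ← hn]
        exact Finset.card_erase_lt_of_mem hdq
      have htr' : t * r' ∈ SatF F N := by
        have : t * r' = t * r - t * monomial dq (coeff dq r) := by rw [hr']; ring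
        rw [this]
        exact Submodule.sub_mem _ h (Ideal.mul_mem_left _ _ hmono)
      have hr'' : r' ∈ SatF F N := ih _ hcard htr' rfl
      have : r = r' + monomial dq (coeff dq r) := by rw [hr']; ring
      rw [this]
      exact Submodule.add_mem _ hr'' hmono

/-- Converse: SatF membership gives a polynomial multiplier outside the prime. -/
lemma exists_mul_mem_of_SatF {F : Set (Fin a)} {N : Ideal (MvPolynomial (Fin a) k)}
    {r : MvPolynomial (Fin a) k} (h : r ∈ SatF F N) :
    ∃ t, t ∉ (pfp F 1 : Ideal (MvPolynomial (Fin a) k)) ∧ t * r ∈ N := by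
  choose e he hmem using h
  set E : Fin a →₀ ℕ := ∑ d ∈ r.support.attach, e d.1 d.2 with hE
  have hdegE : degF F E = 0 := by
    rw [hE]
    rw [degF_eq_zero_iff]
    intro i hi
    rw [Finsupp.finset_sum_apply]
    apply Finset.sum_eq_zero
    intro d _
    exact (degF_eq_zero_iff.1 (he d.1 d.2)) i hi
  refine ⟨monomial E (1 : k), ?_, ?_⟩
  · intro hmemE
    have := (monomial_mem_pfp).1 hmemE
    omega
  · have : r = ∑ d ∈ r.support, monomial d (coeff d r) := (support_sum_monomial_coeff r).symm
    rw [this, Finset.mul_sum, ← Finset.sum_attach r.support (fun d => monomial E 1 * monomial d (coeff d r))]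
    apply Ideal.sum_mem
    intro d _
    rw [monomial_mul, one_mul]
    have h1 : (monomial (d.1 + e d.1 d.2) (1:k)) ∈ N := hmem d.1 d.2
    have h2 : d.1 + e d.1 d.2 ≤ E + d.1 := by
      intro i
      simp only [Finsupp.add_apply]
      have : e d.1 d.2 i ≤ E i := by
        rw [hE, Finsupp.finset_sum_apply]
        exact Finset.single_le_sum (f := fun (x : {x // x ∈ r.support}) => e x.1 x.2 i)
          (fun _ _ => Nat.zero_le _) (Finset.mem_attach _ d)
      omega
    have := monomial_mem_of_le h1 h2
    have h3 : monomial (E + d.1) (coeff d.1 r) = C (coeff d.1 r) * monomial (E + d.1) (1:k) := by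
      rw [C_mul_monomial, mul_one]
    rw [h3]
    exact Ideal.mul_mem_left _ _ this


lemma X_mem_pfp_iff {F : Set (Fin a)} {i : Fin a} :
    (X i : MvPolynomial (Fin a) k) ∈ (pfp F 1 : Ideal (MvPolynomial (Fin a) k)) ↔ i ∈ F := by
  rw [show (X i : MvPolynomial (Fin a) k) = monomial (Finsupp.single i 1) 1 by
    rw [← X_pow_eq_monomial, pow_one], monomial_mem_pfp, degF_single]
  split <;> simp_all

lemma exists_var_of_monomial_mem_prime {P : Ideal (MvPolynomial (Fin a) k)} (hP : P.IsPrime)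
    {g : Fin a →₀ ℕ} (hg : (monomial g (1 : k)) ∈ P) : ∃ i, (X i : MvPolynomial (Fin a) k) ∈ P ∧ 1 ≤ g i := by
  generalize hn : tdeg g = n at *
  induction n using Nat.strong_induction_on generalizing g with
  | _ n ih =>
    rcases eq_or_ne g 0 with rfl | hg0
    · exfalso
      rw [show (monomial (0 : Fin a →₀ ℕ) (1 : k)) = 1 by simp [monomial_zero']] at hg
      exact hP.ne_top (Ideal.eq_top_iff_one _ |>.2 hg)
    · obtain ⟨i, hi⟩ := exists_single_le_of_ne_zero hg0
      have hsplit : (X i : MvPolynomial (Fin a) k) * monomial (g - Finsupp.single i 1) 1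
          = monomial g 1 := by
        rw [show (X i : MvPolynomial (Fin a) k) = monomial (Finsupp.single i 1) 1 by
          rw [← X_pow_eq_monomial, pow_one], monomial_mul, one_mul,
          add_tsub_cancel_of_le hi]
      rcases hP.mem_or_mem (hsplit ▸ hg) with h | h
      · exact ⟨i, h, by simpa [Finsupp.single_apply] using hi i⟩
      · have htd : tdeg (g - Finsupp.single i 1) < n := by
          have h1 : tdeg (g - Finsupp.single i 1) + tdeg (Finsupp.single i 1) = tdeg g := by
            rw [← tdeg_add, tsub_add_cancel_of_le hi]
          have h2 : tdeg (Finsupp.single i 1) = 1 := by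
            rw [tdeg_eq_sum, Finset.sum_eq_single i]
            · simp
            · intro j _ hj; simp [Finsupp.single_apply, Ne.symm hj]
            · simp
          omega
        obtain ⟨j, hj, hj'⟩ := ih _ htd h rfl
        refine ⟨j, hj, ?_⟩
        simp only [Finsupp.tsub_apply] at hj'
        omega

/-- the set of variables contained in a prime -/
def FOf (P : Ideal (MvPolynomial (Fin a) k)) : Set (Fin a) := {i | (X i : MvPolynomial (Fin a) k) ∈ P}

lemma minimalPrime_eq_pfp {I P : Ideal (MvPolynomial (Fin a) k)} (hImon : IsMonomialIdeal I)
    (hP : P ∈ I.minimalPrimes) : P = pfp (FOf P) 1 := by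
  obtain ⟨G, rfl⟩ := hImon
  have hprime : P.IsPrime := hP.1.1
  have hle : Ideal.span ((fun d => (monomial d (1:k))) '' G) ≤ pfp (FOf P) 1 := by
    rw [Ideal.span_le]
    rintro x ⟨g, hg, rfl⟩
    have hgP : (monomial g (1:k)) ∈ P := hP.1.2 (Ideal.subset_span ⟨g, hg, rfl⟩)
    obtain ⟨i, hiP, hgi⟩ := exists_var_of_monomial_mem_prime hprime hgP
    rw [SetLike.mem_coe, monomial_mem_pfp, one_le_degF_iff]
    exact ⟨i, hiP, hgi⟩
  have hle2 : (pfp (FOf P) 1 : Ideal (MvPolynomial (Fin a) k)) ≤ P := by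
    rw [isMonCrit_pfp.span_eq, Ideal.span_le]
    rintro x ⟨d, hd, rfl⟩
    rw [Set.mem_setOf_eq, monomial_mem_pfp, one_le_degF_iff] at hd
    obtain ⟨i, hiP, hdi⟩ := hd
    have : (X i : MvPolynomial (Fin a) k) * monomial (d - Finsupp.single i 1) 1
        = monomial d 1 := by
      rw [show (X i : MvPolynomial (Fin a) k) = monomial (Finsupp.single i 1) 1 by
        rw [← X_pow_eq_monomial, pow_one], monomial_mul, one_mul,
        add_tsub_cancel_of_le (by
          intro j
          rcases eq_or_ne j i with rfl | hji
          · simpa [Finsupp.single_apply] using hdi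
          · simp [Finsupp.single_apply, Ne.symm hji])]
    show (monomial d (1:k)) ∈ P
    rw [← this]
    exact Ideal.mul_mem_right _ _ hiP
  exact le_antisymm (hP.2 ⟨pfp_one_isPrime _, hle⟩ hle2) hle2

/-- Description of contraction of extension to the localization at a prime. -/
lemma mem_comap_map_atPrime {P : Ideal (MvPolynomial (Fin a) k)} [hp : P.IsPrime]
    (N : Ideal (MvPolynomial (Fin a) k)) (r : MvPolynomial (Fin a) k) :
    r ∈ (Ideal.map (algebraMap (MvPolynomial (Fin a) k) (Localization.AtPrime P)) N).comap
        (algebraMap (MvPolynomial (Fin a) k) (Localization.AtPrime P)) ↔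
      ∃ t, t ∉ P ∧ t * r ∈ N := by
  constructor
  · intro h
    rw [Ideal.mem_comap, IsLocalization.mem_map_algebraMap_iff P.primeCompl] at h
    obtain ⟨⟨x, t⟩, hxt⟩ := h
    rw [← map_mul] at hxt
    have hinj := IsLocalization.injective (Localization.AtPrime P) P.primeCompl_le_nonZeroDivisors
    have := hinj hxt
    refine ⟨t.1, t.2, ?_⟩
    rw [mul_comm]
    rw [this]
    exact x.2
  · rintro ⟨t, ht, htr⟩
    rw [Ideal.mem_comap]
    have hunit := IsLocalization.map_units (M := P.primeCompl) (Localization.AtPrime P) ⟨t, ht⟩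
    obtain ⟨u, hu⟩ := hunit
    have h1 : algebraMap (MvPolynomial (Fin a) k) (Localization.AtPrime P) (t * r) ∈
        Ideal.map (algebraMap (MvPolynomial (Fin a) k) (Localization.AtPrime P)) N :=
      Ideal.mem_map_of_mem _ htr
    rw [map_mul] at h1
    have hu' : algebraMap (MvPolynomial (Fin a) k) (Localization.AtPrime P) t = ↑u := hu.symm
    have : algebraMap (MvPolynomial (Fin a) k) (Localization.AtPrime P) r =
        ↑u⁻¹ * (algebraMap (MvPolynomial (Fin a) k) (Localization.AtPrime P) t *
          algebraMap (MvPolynomial (Fin a) k) (Localization.AtPrime P) r) := by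
      rw [hu', ← mul_assoc, Units.inv_mul, one_mul]
    rw [this]
    exact Ideal.mul_mem_left _ _ h1

/-- For a minimal prime `P` over `I` and a variable in `P`, some power of that variable
multiplied by something outside `P` lies in `I`. -/
lemma exists_pow_var_mem {I P : Ideal (MvPolynomial (Fin a) k)}
    (hP : P ∈ I.minimalPrimes) {i : Fin a} (hi : (X i : MvPolynomial (Fin a) k) ∈ P) :
    ∃ c t, 1 ≤ c ∧ t ∉ P ∧ t * (X i : MvPolynomial (Fin a) k) ^ c ∈ I := by
  haveI hprime : P.IsPrime := hP.1.1
  set L := Localization.AtPrime P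
  have hrad : algebraMap (MvPolynomial (Fin a) k) L (X i) ∈
      (Ideal.map (algebraMap (MvPolynomial (Fin a) k) L) I).radical := by
    rw [Ideal.radical_eq_sInf, Submodule.mem_sInf]
    rintro Q hQmem
    obtain ⟨hQle, hQprime⟩ := hQmem
    haveI := hQprime
    have hcomap : Ideal.comap (algebraMap (MvPolynomial (Fin a) k) L) Q ≤ P := by
      intro y hy
      by_contra hyP
      have : IsUnit (algebraMap (MvPolynomial (Fin a) k) L y) :=
        IsLocalization.map_units (M := P.primeCompl) L ⟨y, hyP⟩
      rw [Ideal.mem_comap] at hy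
      exact hQprime.ne_top (Ideal.eq_top_of_isUnit_mem Q hy this)
    have hIle : I ≤ Ideal.comap (algebraMap (MvPolynomial (Fin a) k) L) Q :=
      le_trans (Ideal.le_comap_map) (Ideal.comap_mono hQle)
    have hPle : P ≤ Ideal.comap (algebraMap (MvPolynomial (Fin a) k) L) Q :=
      hP.2 ⟨Ideal.IsPrime.comap _, hIle⟩ hcomap
    exact hPle hi
  rw [Ideal.mem_radical_iff] at hrad
  obtain ⟨c, hc⟩ := hrad
  rw [← map_pow, ← Ideal.mem_comap] at hc
  rw [mem_comap_map_atPrime] at hc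
  obtain ⟨t, ht, htc⟩ := hc
  rcases Nat.eq_zero_or_pos c with rfl | hcpos
  · exfalso
    rw [pow_zero, mul_one] at htc
    exact ht (hP.1.2 htc)
  · exact ⟨c, t, hcpos, ht, htc⟩


section MaxGen

lemma mxI_eq_span : mxI k (Fin a) = Ideal.span
    ((fun d => (monomial d (1 : k))) '' (Set.range fun i : Fin a => Finsupp.single i 1)) := by
  rw [mxI]
  congr 1
  ext x
  constructor
  · rintro ⟨i, rfl⟩
    exact ⟨Finsupp.single i 1, ⟨i, rfl⟩, by show (monomial _ _) = _; rw [← X_pow_eq_monomial, pow_one]⟩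
  · rintro ⟨d, ⟨i, rfl⟩, rfl⟩
    exact ⟨i, by show X i = (monomial _ _); rw [← X_pow_eq_monomial, pow_one]⟩

lemma isMonCrit_mxI : IsMonCrit (mxI k (Fin a)) := by
  rw [mxI_eq_span]; exact isMonCrit_of_span

lemma monomial_mem_mxI_iff {d : Fin a →₀ ℕ} :
    (monomial d (1 : k)) ∈ mxI k (Fin a) ↔ d ≠ 0 := by
  rw [mxI_eq_span]
  constructor
  · intro h
    obtain ⟨g, ⟨i, rfl⟩, hle⟩ := mem_ideal_span_monomial_image.1 h d
      (by rw [support_monomial, if_neg one_ne_zero]; simp)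
    intro h0
    have := hle i
    simp [h0, Finsupp.single_apply] at this
  · intro h
    obtain ⟨i, hi⟩ := exists_single_le_of_ne_zero h
    exact monomial_mem_of_le (Ideal.subset_span ⟨Finsupp.single i 1, ⟨i, rfl⟩, rfl⟩) hi

lemma mxI_le_pfp : mxI k (Fin a) ≤ pfp Set.univ 1 := by
  rw [mxI_eq_span, Ideal.span_le]
  rintro x ⟨d, ⟨i, rfl⟩, rfl⟩
  rw [SetLike.mem_coe, monomial_mem_pfp, degF_single]
  simp

lemma I_le_pfp_two {I : Ideal (MvPolynomial (Fin a) k)} (hIm : I ≤ mxI k (Fin a) ^ 2) :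
    I ≤ pfp Set.univ 2 := by
  calc I ≤ mxI k (Fin a) ^ 2 := hIm
  _ ≤ (pfp Set.univ 1 : Ideal (MvPolynomial (Fin a) k)) ^ 2 := Ideal.pow_right_mono mxI_le_pfp 2
  _ ≤ pfp Set.univ (1 * 2) := pfp_pow_le (by norm_num)
  _ = pfp Set.univ 2 := by norm_num

/-- the set of exponents of minimal monomial generators -/
def minGens (A : Ideal (MvPolynomial (Fin a) k)) : Set (Fin a →₀ ℕ) :=
  {d | (monomial d (1 : k)) ∈ A ∧ (monomial d (1 : k)) ∉ mxI k (Fin a) * A}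

lemma maxGenDeg_eq (A : Ideal (MvPolynomial (Fin a) k)) :
    maxGenDeg A = sSup (tdeg '' minGens A) := by
  rw [maxGenDeg]
  congr 1
  ext n
  constructor
  · rintro ⟨d, h1, h2, rfl⟩
    exact ⟨d, ⟨h1, h2⟩, rfl⟩
  · rintro ⟨d, ⟨h1, h2⟩, rfl⟩
    exact ⟨d, h1, h2, rfl⟩

lemma minGens_antichain (A : Ideal (MvPolynomial (Fin a) k)) :
    IsAntichain (· ≤ ·) (minGens A) := by
  rintro d1 ⟨h1, h1'⟩ d2 ⟨h2, h2'⟩ hne hle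
  apply h2'
  have hd : d2 - d1 ≠ 0 := by
    intro h
    exact hne (le_antisymm hle (tsub_eq_zero_iff_le.1 h))
  have : (monomial (d2 - d1) (1:k)) * monomial d1 1 = monomial d2 1 := by
    rw [monomial_mul, one_mul, tsub_add_cancel_of_le hle]
  rw [← this]
  exact Ideal.mul_mem_mul (monomial_mem_mxI_iff.2 hd) h1

lemma minGens_finite (A : Ideal (MvPolynomial (Fin a) k)) : (minGens A).Finite :=
  (minGens_antichain A).finite_of_partiallyWellOrderedOn (Set.isPWO_of_wellQuasiOrderedLE _)

lemma bddAbove_gen_degs (A : Ideal (MvPolynomial (Fin a) k)) :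
    BddAbove (tdeg '' minGens A) :=
  ((minGens_finite A).image _).bddAbove

lemma le_maxGenDeg {A : Ideal (MvPolynomial (Fin a) k)} {d : Fin a →₀ ℕ}
    (h : d ∈ minGens A) : tdeg d ≤ maxGenDeg A := by
  rw [maxGenDeg_eq]
  exact le_csSup (bddAbove_gen_degs A) ⟨d, h, rfl⟩

lemma maxGenDeg_mem {A : Ideal (MvPolynomial (Fin a) k)} (h : maxGenDeg A ≠ 0) :
    ∃ d ∈ minGens A, tdeg d = maxGenDeg A := by
  rw [maxGenDeg_eq] at h ⊢
  have hne : (tdeg '' minGens A).Nonempty := by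
    by_contra hc
    rw [Set.not_nonempty_iff_eq_empty] at hc
    rw [hc] at h
    simp at h
  obtain ⟨d, hd, hd'⟩ := Nat.sSup_mem hne (bddAbove_gen_degs A)
  exact ⟨d, hd, hd'⟩

/-- Any monomial of a monomial-criterion ideal is divisible by a minimal monomial generator. -/
lemma exists_minGen_le {A : Ideal (MvPolynomial (Fin a) k)} (hA : IsMonCrit A)
    {w : Fin a →₀ ℕ} (hw : (monomial w (1 : k)) ∈ A) :
    ∃ d ∈ minGens A, d ≤ w := by
  set T : Set ℕ := {n | ∃ d, d ≤ w ∧ (monomial d (1:k)) ∈ A ∧ n = tdeg d} with hT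
  have hTne : T.Nonempty := ⟨tdeg w, w, le_rfl, hw, rfl⟩
  obtain ⟨d, hdw, hdA, hdt⟩ : ∃ d, d ≤ w ∧ (monomial d (1:k)) ∈ A ∧ sInf T = tdeg d := by
    have := Nat.sInf_mem hTne
    rw [hT] at this
    obtain ⟨d, h1, h2, h3⟩ := this
    exact ⟨d, h1, h2, h3⟩
  refine ⟨d, ⟨hdA, ?_⟩, hdw⟩
  intro hmem
  rw [monomial_mem_mul isMonCrit_mxI hA] at hmem
  obtain ⟨d1, d2, hd1, hd2, hle⟩ := hmem
  have hd1ne : d1 ≠ 0 := by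
    intro h
    rw [h] at hd1
    rw [monomial_mem_mxI_iff] at hd1
    exact hd1 rfl
  have h1 : 1 ≤ tdeg d1 := by
    rw [Nat.one_le_iff_ne_zero]
    intro h
    exact hd1ne (tdeg_eq_zero_iff.1 h)
  have hd2w : d2 ≤ w := by
    refine le_trans ?_ (le_trans hle hdw)
    intro j
    simp only [Finsupp.add_apply]
    omega
  have hd2T : tdeg d2 ∈ T := ⟨d2, hd2w, hd2, rfl⟩
  have hlt : tdeg d2 < tdeg d := by
    have := degF_mono (F := Set.univ) hle
    rw [degF_univ, degF_univ, ← degF_univ (d1 + d2), degF_add, degF_univ, degF_univ] at this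
    omega
  have := Nat.sInf_le hd2T
  omega

end MaxGen


section SymbPow

variable {I : Ideal (MvPolynomial (Fin a) k)}

lemma isMonCrit_I (hImon : IsMonomialIdeal I) : IsMonCrit I := by
  obtain ⟨G, rfl⟩ := hImon
  exact isMonCrit_of_span

lemma mem_radical_iff_min (hImon : IsMonomialIdeal I) {r : MvPolynomial (Fin a) k} :
    r ∈ I.radical ↔ ∀ P ∈ I.minimalPrimes, r ∈ (pfp (FOf P) 1 : Ideal (MvPolynomial (Fin a) k)) := by
  rw [← Ideal.sInf_minimalPrimes, Submodule.mem_sInf]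
  constructor
  · intro h P hP
    rw [← minimalPrime_eq_pfp hImon hP]
    exact h P hP
  · intro h P hP
    rw [minimalPrime_eq_pfp hImon hP]
    exact h P hP

lemma isMonCrit_radical (hImon : IsMonomialIdeal I) : IsMonCrit I.radical := by
  intro p hp d hd
  rw [mem_radical_iff_min hImon] at hp ⊢
  intro P hP
  exact isMonCrit_pfp p (hp P hP) d hd

lemma mem_symbPow_iff (hImon : IsMonomialIdeal I)
    (hunmixed : associatedPrimes (MvPolynomial (Fin a) k) (MvPolynomial (Fin a) k ⧸ I) =
      I.minimalPrimes) {s : ℕ} {r : MvPolynomial (Fin a) k} :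
    r ∈ symbPow I s ↔ ∀ P ∈ I.minimalPrimes, r ∈ SatF (FOf P) (I ^ s) := by
  have hcrit : IsMonCrit (I ^ s) := (isMonCrit_I hImon).pow s
  rw [symbPow, Submodule.mem_sInf]
  constructor
  · intro h P hP
    haveI hpr : P.IsPrime := hP.1.1
    have hP' : P ∈ associatedPrimes (MvPolynomial (Fin a) k) (MvPolynomial (Fin a) k ⧸ I) := by
      rw [hunmixed]; exact hP
    have hmem := h ((Ideal.map (algebraMap (MvPolynomial (Fin a) k)
        (Localization.AtPrime P)) (I ^ s)).comap
        (algebraMap (MvPolynomial (Fin a) k) (Localization.AtPrime P))) ⟨P, hP', rfl⟩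
    rw [mem_comap_map_atPrime] at hmem
    obtain ⟨t, ht, htr⟩ := hmem
    have htp : t ∉ (pfp (FOf P) 1 : Ideal (MvPolynomial (Fin a) k)) := by
      rw [← minimalPrime_eq_pfp hImon hP]; exact ht
    exact SatF_of_mul_mem htp (le_SatF hcrit htr)
  · intro h J hJ
    obtain ⟨P, hP, rfl⟩ := hJ
    haveI := hP.isPrime
    have hPmin : P ∈ I.minimalPrimes := by rw [← hunmixed]; exact hP
    obtain ⟨t, ht, htr⟩ := exists_mul_mem_of_SatF (h P hPmin)
    rw [mem_comap_map_atPrime]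
    refine ⟨t, ?_, htr⟩
    rw [minimalPrime_eq_pfp hImon hPmin]
    exact ht

lemma isMonCrit_symbPow (hImon : IsMonomialIdeal I)
    (hunmixed : associatedPrimes (MvPolynomial (Fin a) k) (MvPolynomial (Fin a) k ⧸ I) =
      I.minimalPrimes) {s : ℕ} : IsMonCrit (symbPow I s) := by
  intro p hp d hd
  rw [mem_symbPow_iff hImon hunmixed] at hp ⊢
  intro P hP
  exact isMonCrit_SatF p (hp P hP) d hd

lemma pow_le_symbPow {s : ℕ} : I ^ s ≤ symbPow I s := by
  rw [symbPow]
  apply le_sInf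
  rintro J ⟨P, hP, rfl⟩
  haveI := hP.isPrime
  exact Ideal.le_comap_map

end SymbPow


lemma degF_mono_set {F F' : Set (Fin a)} (h : F ⊆ F') (d : Fin a →₀ ℕ) :
    degF F d ≤ degF F' d := by
  apply Finset.sum_le_sum
  intro i _
  by_cases hi : i ∈ F
  · rw [if_pos hi, if_pos (h hi)]
  · rw [if_neg hi]; exact Nat.zero_le _

lemma pfp_mono_set {F F' : Set (Fin a)} (h : F ⊆ F') (n : ℕ) :
    (pfp F n : Ideal (MvPolynomial (Fin a) k)) ≤ pfp F' n := by
  intro p hp d hd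
  exact le_trans (hp d hd) (degF_mono_set h d)

lemma minimalPrimes_finite {I : Ideal (MvPolynomial (Fin a) k)} (hImon : IsMonomialIdeal I) :
    I.minimalPrimes.Finite := by
  have : I.minimalPrimes ⊆ (fun F : Set (Fin a) => (pfp F 1 : Ideal (MvPolynomial (Fin a) k))) ''
      Set.univ := by
    intro P hP
    exact ⟨FOf P, Set.mem_univ _, (minimalPrime_eq_pfp hImon hP).symm⟩
  exact Set.Finite.subset (Set.finite_univ.image _) this

/-- If the only associated prime is `P0` then `I` is saturated with respect to `P0`. -/
lemma mem_of_mul_mem_assPrimes {I P0 : Ideal (MvPolynomial (Fin a) k)}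
    (hass : associatedPrimes (MvPolynomial (Fin a) k) (MvPolynomial (Fin a) k ⧸ I) = {P0})
    {t r : MvPolynomial (Fin a) k} (ht : t ∉ P0) (h : t * r ∈ I) : r ∈ I := by
  by_contra hr
  have hne : (Ideal.Quotient.mk I r) ≠ 0 := by
    rwa [Ne, Ideal.Quotient.eq_zero_iff_mem]
  obtain ⟨P, hPass, hann⟩ := exists_le_isAssociatedPrime_of_isNoetherianRing
    (MvPolynomial (Fin a) k) (Ideal.Quotient.mk I r) hne
  have htann : t ∈ (Submodule.span (MvPolynomial (Fin a) k)
      {Ideal.Quotient.mk I r}).annihilator := by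
    rw [Submodule.mem_annihilator_span_singleton]
    show t • (Ideal.Quotient.mk I r) = 0
    have h1 : t • (Ideal.Quotient.mk I r) = Ideal.Quotient.mk I (t * r) := by
      rw [← smul_eq_mul]
      exact (Submodule.Quotient.mk_smul I t r).symm
    rw [h1, Ideal.Quotient.eq_zero_iff_mem]
    exact h
  have hPP0 : P = P0 := by
    have : P ∈ associatedPrimes (MvPolynomial (Fin a) k) (MvPolynomial (Fin a) k ⧸ I) := hPass
    rw [hass] at this
    exact this
  exact ht (hPP0 ▸ hann (by
    rw [Submodule.mem_colon_singleton, Submodule.mem_bot]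
    rwa [Submodule.mem_annihilator_span_singleton] at htann))


theorem main_thm {I : Ideal (MvPolynomial (Fin a) k)} (hImon : IsMonomialIdeal I)
    (hInz : I ≠ ⊥) (hIproper : I ≠ ⊤) (hIm : I ≤ mxI k (Fin a) ^ 2)
    (hunmixed : associatedPrimes (MvPolynomial (Fin a) k) (MvPolynomial (Fin a) k ⧸ I) =
      I.minimalPrimes)
    (s : ℕ) (hs : 1 ≤ s) :
    max 2 (maxGenDeg I.radical) * s ≤ maxGenDeg (symbPow I s) := by
  have hcritI := isMonCrit_I hImon
  have hcritIs : IsMonCrit (I ^ s) := hcritI.pow s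
  have hcritJ := isMonCrit_symbPow hImon hunmixed (s := s)
  by_cases hd : maxGenDeg I.radical ≤ 1
  · -- Case B : the radical is generated by variables
    rw [max_eq_left (le_trans hd one_le_two)]
    set G0 : Set (Fin a) := FOf (I.radical) with hG0
    have hradproper : I.radical ≠ ⊤ := fun h => hIproper (Ideal.radical_eq_top.1 h)
    have claim1 : ∀ dm : Fin a →₀ ℕ, (monomial dm (1:k)) ∈ I.radical → 1 ≤ degF G0 dm := by
      intro dm hdm
      obtain ⟨d0, hd0min, hd0le⟩ := exists_minGen_le (isMonCrit_radical hImon) hdm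
      have h1 : tdeg d0 ≤ 1 := le_trans (le_maxGenDeg hd0min) hd
      have h0 : tdeg d0 ≠ 0 := by
        intro h
        have hz : d0 = 0 := tdeg_eq_zero_iff.1 h
        rw [hz] at hd0min
        have : (1 : MvPolynomial (Fin a) k) ∈ I.radical := by
          have := hd0min.1
          rwa [show (monomial (0 : Fin a →₀ ℕ) (1:k)) = 1 by simp [monomial_zero']] at this
        exact hradproper ((Ideal.eq_top_iff_one _).2 this)
      obtain ⟨i, hi⟩ := tdeg_eq_one (d := d0) (by omega)
      have hiG0 : i ∈ G0 := by
        show (X i : MvPolynomial (Fin a) k) ∈ I.radical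
        have h2 := hd0min.1
        rw [hi] at h2
        rwa [show (monomial (Finsupp.single i 1) (1:k)) = X i by
          rw [← X_pow_eq_monomial, pow_one]] at h2
      rw [one_le_degF_iff]
      refine ⟨i, hiG0, ?_⟩
      rw [hi] at hd0le
      have := hd0le i
      simpa [Finsupp.single_apply] using this
    have hP0prime : (pfp G0 1 : Ideal (MvPolynomial (Fin a) k)).IsPrime := pfp_one_isPrime G0
    have hIleP0 : I ≤ pfp G0 1 := by
      conv_lhs => rw [hcritI.span_eq]
      rw [Ideal.span_le]
      rintro x ⟨dg, hdg, rfl⟩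
      rw [SetLike.mem_coe, monomial_mem_pfp]
      exact claim1 dg (Ideal.le_radical hdg)
    haveI := hP0prime
    obtain ⟨Pm, hPm, hPmle⟩ := Ideal.exists_minimalPrimes_le hIleP0
    have hPmF : FOf Pm = G0 := by
      apply Set.eq_of_subset_of_subset
      · intro i hiF
        exact (X_mem_pfp_iff).1 (hPmle hiF)
      · intro i hiG
        show (X i) ∈ Pm
        have hXrad : (X i : MvPolynomial (Fin a) k) ∈ I.radical := hiG
        rw [mem_radical_iff_min hImon] at hXrad
        have := hXrad Pm hPm
        rwa [← minimalPrime_eq_pfp hImon hPm] at this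
    have hPmeq : Pm = pfp G0 1 := by rw [minimalPrime_eq_pfp hImon hPm, hPmF]
    have hP0mem : (pfp G0 1 : Ideal (MvPolynomial (Fin a) k)) ∈ I.minimalPrimes := hPmeq ▸ hPm
    have hMin : I.minimalPrimes = {(pfp G0 1 : Ideal (MvPolynomial (Fin a) k))} := by
      apply Set.eq_of_subset_of_subset
      · intro P hP
        have hsub : G0 ⊆ FOf P := by
          intro i hiG
          show X i ∈ P
          have hXrad : (X i : MvPolynomial (Fin a) k) ∈ I.radical := hiG
          rw [mem_radical_iff_min hImon] at hXrad
          have := hXrad P hP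
          rwa [← minimalPrime_eq_pfp hImon hP] at this
        have hle : (pfp G0 1 : Ideal (MvPolynomial (Fin a) k)) ≤ P := by
          rw [minimalPrime_eq_pfp hImon hP]
          exact pfp_mono_set hsub 1
        have := hP.2 ⟨hP0prime, hIleP0⟩ hle
        exact Set.mem_singleton_iff.2 (le_antisymm this hle)
      · intro P hP
        rw [Set.mem_singleton_iff] at hP
        rw [hP]
        exact hP0mem
    have hass : associatedPrimes (MvPolynomial (Fin a) k) (MvPolynomial (Fin a) k ⧸ I)
        = {(pfp G0 1 : Ideal (MvPolynomial (Fin a) k))} := by rw [hunmixed, hMin]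
    have claim3 : ∀ dm : Fin a →₀ ℕ, (monomial dm (1:k)) ∈ I → 2 ≤ degF G0 dm := by
      intro dm hdm
      set m0 := dm.filter (· ∈ G0) with hm0
      set m1 := dm.filter (fun i => ¬ (i ∈ G0)) with hm1
      have hsplit : m0 + m1 = dm := Finsupp.filter_pos_add_filter_neg dm _
      have hm1deg : degF G0 m1 = 0 := by
        rw [degF_eq_zero_iff]
        intro i hi
        rw [hm1, Finsupp.filter_apply]
        simp [hi]
      have ht : (monomial m1 (1:k)) ∉ (pfp G0 1 : Ideal (MvPolynomial (Fin a) k)) := by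
        rw [monomial_mem_pfp]
        omega
      have hmul : (monomial m1 (1:k)) * monomial m0 1 = monomial dm 1 := by
        rw [monomial_mul, one_mul, add_comm, hsplit]
      have hm0I : (monomial m0 (1:k)) ∈ I :=
        mem_of_mul_mem_assPrimes hass ht (by rw [hmul]; exact hdm)
      have h2 : 2 ≤ tdeg m0 := by
        have h3 := monomial_mem_pfp.1 ((I_le_pfp_two hIm) hm0I)
        rwa [degF_univ] at h3
      have hdeg0 : degF G0 m0 = tdeg m0 := by
        rw [degF, tdeg_eq_sum]
        apply Finset.sum_congr rfl
        intro i _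
        by_cases hi : i ∈ G0
        · rw [if_pos hi]
        · rw [if_neg hi, hm0, Finsupp.filter_apply, if_neg hi]
      have h4 : degF G0 dm = degF G0 m0 + degF G0 m1 := by rw [← degF_add, hsplit]
      omega
    have hIle2 : I ≤ pfp G0 2 := by
      conv_lhs => rw [hcritI.span_eq]
      rw [Ideal.span_le]
      rintro x ⟨dg, hdg, rfl⟩
      rw [SetLike.mem_coe, monomial_mem_pfp]
      exact claim3 dg hdg
    have hIsle : I ^ s ≤ pfp G0 (2 * s) :=
      le_trans (Ideal.pow_right_mono hIle2 s) (pfp_pow_le hs)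
    have hFOfP0 : FOf (pfp G0 1 : Ideal (MvPolynomial (Fin a) k)) = G0 := by
      ext i; exact X_mem_pfp_iff
    have hJbound : ∀ dm : Fin a →₀ ℕ, (monomial dm (1:k)) ∈ symbPow I s → 2 * s ≤ tdeg dm := by
      intro dm hdm
      rw [mem_symbPow_iff hImon hunmixed] at hdm
      have h1 := hdm _ hP0mem
      rw [hFOfP0] at h1
      have h2 := monomial_mem_pfp.1 (SatF_le_pfp hIsle h1)
      calc 2 * s ≤ degF G0 dm := h2
      _ ≤ tdeg dm := degF_le_tdeg _ _
    obtain ⟨G, hG⟩ := hImon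
    have hGne : G.Nonempty := by
      rcases Set.eq_empty_or_nonempty G with rfl | h
      · exfalso; apply hInz; rw [hG, Set.image_empty, Ideal.span_empty]
      · exact h
    obtain ⟨g, hg⟩ := hGne
    have hgI : (monomial g (1:k)) ∈ I := by rw [hG]; exact Ideal.subset_span ⟨g, hg, rfl⟩
    have hgJ : (monomial (s • g) (1:k)) ∈ symbPow I s := by
      apply pow_le_symbPow
      have := Ideal.pow_mem_pow hgI s
      rwa [monomial_pow, one_pow] at this
    obtain ⟨dmin, hdmin, _⟩ := exists_minGen_le hcritJ hgJ
    calc 2 * s ≤ tdeg dmin := hJbound dmin hdmin.1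
    _ ≤ maxGenDeg (symbPow I s) := le_maxGenDeg hdmin
  · -- Case A : the radical has a minimal generator of degree ≥ 2
    push_neg at hd
    rw [max_eq_right (by omega)]
    obtain ⟨du, hdu_min, hdu_deg⟩ := maxGenDeg_mem (by omega : maxGenDeg I.radical ≠ 0)
    have hstruct : ∀ j ∈ du.support, ∃ F : Set (Fin a),
        (pfp F 1 : Ideal (MvPolynomial (Fin a) k)) ∈ I.minimalPrimes ∧ j ∈ F ∧ du j = 1 ∧
          ∀ i ∈ F, i ≠ j → du i = 0 := by
      intro j hj
      have hj1 : 1 ≤ du j := by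
        rw [Finsupp.mem_support_iff, ← Nat.one_le_iff_ne_zero] at hj
        exact hj
      have hle1 : Finsupp.single j 1 ≤ du := by
        intro i
        rcases eq_or_ne i j with rfl | hne
        · simpa [Finsupp.single_apply] using hj1
        · simp [Finsupp.single_apply, Ne.symm hne]
      have hsub : (monomial (du - Finsupp.single j 1) (1:k)) ∉ I.radical := by
        intro hmem
        apply hdu_min.2
        have heq : (monomial (Finsupp.single j 1) (1:k)) *
            monomial (du - Finsupp.single j 1) 1 = monomial du 1 := by
          rw [monomial_mul, one_mul, add_tsub_cancel_of_le hle1]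
        rw [← heq]
        exact Ideal.mul_mem_mul
          (monomial_mem_mxI_iff.2 (fun h => one_ne_zero (Finsupp.single_eq_zero.1 h))) hmem
      have hmemrad : (monomial du (1:k)) ∈ I.radical := hdu_min.1
      rw [mem_radical_iff_min hImon] at hmemrad
      have hexP : ∃ P ∈ I.minimalPrimes,
          (monomial (du - Finsupp.single j 1) (1:k)) ∉ (pfp (FOf P) 1 : Ideal (MvPolynomial (Fin a) k)) := by
        by_contra hc
        push_neg at hc
        apply hsub
        rw [mem_radical_iff_min hImon]
        intro P hP
        exact hc P hP
      obtain ⟨P, hP, hnot⟩ := hexP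
      have hz : ∀ i ∈ FOf P, du i - (Finsupp.single j 1) i = 0 := by
        intro i hi
        have h0 : degF (FOf P) (du - Finsupp.single j 1) = 0 := by
          rw [monomial_mem_pfp] at hnot; omega
        have := degF_eq_zero_iff.1 h0 i hi
        rwa [Finsupp.tsub_apply] at this
      obtain ⟨i0, hi0F, hi0⟩ := one_le_degF_iff.1 (monomial_mem_pfp.1 (hmemrad P hP))
      have hij : i0 = j := by
        by_contra hne
        have h5 := hz i0 hi0F
        rw [Finsupp.single_apply, if_neg (Ne.symm hne)] at h5
        omega
      refine ⟨FOf P, by rw [← minimalPrime_eq_pfp hImon hP]; exact hP, hij ▸ hi0F, ?_, ?_⟩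
      · have h5 := hz j (hij ▸ hi0F)
        rw [Finsupp.single_apply, if_pos rfl] at h5
        rw [hij] at hi0
        omega
      · intro i hi hne
        have h5 := hz i hi
        rw [Finsupp.single_apply, if_neg (Ne.symm hne)] at h5
        omega
    have hsquare : ∀ j ∈ du.support, du j = 1 := by
      intro j hj
      obtain ⟨F, _, _, h, _⟩ := hstruct j hj
      exact h
    have hcard : tdeg du = du.support.card := by
      rw [tdeg, Finsupp.sum]
      rw [Finset.sum_congr rfl (fun j hj => hsquare j hj)]
      simp
    have hdune : du.support.Nonempty := by
      rw [Finset.nonempty_iff_ne_empty]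
      intro h
      rw [hcard, h] at hdu_deg
      simp at hdu_deg
      omega
    obtain ⟨j0, hj0⟩ := hdune
    have hMinFin := minimalPrimes_finite hImon
    have htot : ∀ P : Ideal (MvPolynomial (Fin a) k),
        ∃ (j : Fin a) (c : ℕ) (t : MvPolynomial (Fin a) k),
        P ∈ I.minimalPrimes → (j ∈ du.support ∧ j ∈ FOf P ∧ 1 ≤ c ∧ t ∉ P ∧
          t * (X j : MvPolynomial (Fin a) k) ^ c ∈ I) := by
      intro P
      by_cases hP : P ∈ I.minimalPrimes
      · have hmemrad : (monomial du (1:k)) ∈ I.radical := hdu_min.1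
        rw [mem_radical_iff_min hImon] at hmemrad
        obtain ⟨i, hiF, hi1⟩ := one_le_degF_iff.1 (monomial_mem_pfp.1 (hmemrad P hP))
        obtain ⟨c, t, hc, ht, htc⟩ := exists_pow_var_mem hP hiF
        exact ⟨i, c, t, fun _ => ⟨Finsupp.mem_support_iff.2 (by omega), hiF, hc, ht, htc⟩⟩
      · exact ⟨j0, 1, 1, fun h => absurd h hP⟩
    choose jf cf tf hforall using htot
    set C := hMinFin.toFinset.sup cf with hC
    have hCle : ∀ P ∈ I.minimalPrimes, cf P ≤ C := fun P hP =>
      Finset.le_sup ((Set.Finite.mem_toFinset hMinFin).2 hP)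
    set dw : Fin a →₀ ℕ := (s * C) • du with hdw
    have hdw_apply : ∀ i, dw i = (s * C) * du i := by
      intro i
      rw [hdw, Finsupp.smul_apply, smul_eq_mul]
    have hdwj : ∀ P ∈ I.minimalPrimes, Finsupp.single (jf P) (cf P * s) ≤ dw := by
      intro P hP
      obtain ⟨hjsupp, hjF, hc1, ht, htc⟩ := hforall P hP
      intro i
      rcases eq_or_ne i (jf P) with rfl | hne
      · rw [Finsupp.single_apply, if_pos rfl, hdw_apply]
        have h1 : 1 ≤ du (jf P) := by
          rw [Finsupp.mem_support_iff, ← Nat.one_le_iff_ne_zero] at hjsupp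
          exact hjsupp
        have h2 : cf P * s ≤ C * s := Nat.mul_le_mul_right s (hCle P hP)
        have h3 : s * C * 1 ≤ s * C * du (jf P) := Nat.mul_le_mul_left _ h1
        have h4 : C * s = s * C * 1 := by ring
        omega
      · rw [Finsupp.single_apply, if_neg (Ne.symm hne)]
        exact Nat.zero_le _
    have hwJ : (monomial dw (1:k)) ∈ symbPow I s := by
      rw [mem_symbPow_iff hImon hunmixed]
      intro P hP
      obtain ⟨hjsupp, hjF, hc1, ht, htc⟩ := hforall P hP
      haveI hPrime : P.IsPrime := hP.1.1
      have hts : (tf P) ^ s ∉ (pfp (FOf P) 1 : Ideal (MvPolynomial (Fin a) k)) := by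
        rw [← minimalPrime_eq_pfp hImon hP]
        intro hmem
        exact ht (hPrime.mem_of_pow_mem s hmem)
      apply SatF_of_mul_mem hts
      apply le_SatF hcritIs
      have hle := hdwj P hP
      have heq : (monomial dw (1:k)) = (X (jf P) : MvPolynomial (Fin a) k) ^ (cf P * s) *
          monomial (dw - Finsupp.single (jf P) (cf P * s)) 1 := by
        rw [X_pow_eq_monomial, monomial_mul, one_mul, add_tsub_cancel_of_le hle]
      rw [heq]
      have hpow : (tf P * (X (jf P) : MvPolynomial (Fin a) k) ^ (cf P)) ^ s ∈ I ^ s :=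
        Ideal.pow_mem_pow htc s
      have heq2 : tf P ^ s * ((X (jf P) : MvPolynomial (Fin a) k) ^ (cf P * s) *
          monomial (dw - Finsupp.single (jf P) (cf P * s)) 1)
          = (tf P * (X (jf P) : MvPolynomial (Fin a) k) ^ (cf P)) ^ s *
            monomial (dw - Finsupp.single (jf P) (cf P * s)) 1 := by
        rw [mul_pow, ← pow_mul]
        ring
      rw [heq2]
      exact Ideal.mul_mem_right _ _ hpow
    obtain ⟨d', hd'min, hd'le⟩ := exists_minGen_le hcritJ hwJ
    have hcoord : ∀ j ∈ du.support, s ≤ d' j := by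
      intro j hj
      obtain ⟨F, hFmin, hjF, hduj, hFz⟩ := hstruct j hj
      have h1 : (monomial d' (1:k)) ∈ SatF (FOf (pfp F 1 : Ideal (MvPolynomial (Fin a) k))) (I ^ s) :=
        (mem_symbPow_iff hImon hunmixed).1 hd'min.1 _ hFmin
      have hFOf : FOf (pfp F 1 : Ideal (MvPolynomial (Fin a) k)) = F := by
        ext i; exact X_mem_pfp_iff
      rw [hFOf] at h1
      have hIsleF : I ^ s ≤ pfp F s := by
        calc I ^ s ≤ (pfp F 1 : Ideal (MvPolynomial (Fin a) k)) ^ s :=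
              Ideal.pow_right_mono hFmin.1.2 s
        _ ≤ pfp F (1 * s) := pfp_pow_le hs
        _ = pfp F s := by rw [one_mul]
      have h2 := monomial_mem_pfp.1 (SatF_le_pfp hIsleF h1)
      have h3 : degF F d' = d' j := by
        rw [degF, Finset.sum_eq_single j]
        · rw [if_pos hjF]
        · intro i _ hne
          by_cases hiF : i ∈ F
          · rw [if_pos hiF]
            have hdu0 : du i = 0 := hFz i hiF hne
            have h6 : d' i ≤ dw i := hd'le i
            rw [hdw_apply i, hdu0] at h6
            omega
          · rw [if_neg hiF]
        · intro h; exact absurd (Finset.mem_univ j) h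
      omega
    have hsum : tdeg du * s ≤ tdeg d' := by
      rw [tdeg_eq_sum d']
      calc tdeg du * s = du.support.card * s := by rw [hcard]
      _ = ∑ _j ∈ du.support, s := by rw [Finset.sum_const, smul_eq_mul]
      _ ≤ ∑ j ∈ du.support, d' j := Finset.sum_le_sum hcoord
      _ ≤ ∑ j : Fin a, d' j := Finset.sum_le_sum_of_subset (Finset.subset_univ _)
    calc maxGenDeg I.radical * s = tdeg du * s := by rw [hdu_deg]
    _ ≤ tdeg d' := hsum
    _ ≤ maxGenDeg (symbPow I s) := le_maxGenDeg hd'min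

end SP16

theorem maxGenDeg_symbPow_ge
    (k : Type*) [Field k] (a : ℕ)
    (I : Ideal (MvPolynomial (Fin a) k)) (hImon : IsMonomialIdeal I)
    (hInz : I ≠ ⊥) (hIproper : I ≠ ⊤) (hIm : I ≤ mxI k (Fin a) ^ 2)
    -- `I` is unmixed
    (hunmixed : associatedPrimes (MvPolynomial (Fin a) k) (MvPolynomial (Fin a) k ⧸ I) =
      I.minimalPrimes)
    (s : ℕ) (hs : 1 ≤ s) :
    max 2 (maxGenDeg I.radical) * s ≤ maxGenDeg (symbPow I s) := by
  exact SP16.main_thm hImon hInz hIproper hIm hunmixed s hs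

end
end

section
/- Let k be a field, let R and S be polynomial rings over k in at least one variable each, with graded maximal ideals m and n, let I ⊆ m² and J ⊆ n² be proper homogeneous ideals, let T = R ⊗_k S, and let F = I + J + mn ⊆ T. Let s ≥ 2 and 1 ≤ i ≤ s−1 be integers. Then: (1) (I^i ∩ m^s)·n^{s−i} ∩ F^s ⊆ (mn)^{s−i}·F^i as ideals of T, and the contraction to R of the colon ideal (F^s :_T n^{s−i}) intersected with I^i ∩ m^s equals m^{s−i}I^i, i.e., {x ∈ I^i ∩ m^s : x·n^{s−i} ⊆ F^s} = m^{s−i}I^i; (2) if moreover I ≠ (0), then I^i m^{s−i−1} n^{s−i} ⊄ F^s. -/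
/- STATEMENT 17: k a field, R and S polynomial rings over k in at least one variable each
with graded maximal ideals m and n, I ⊆ m² and J ⊆ n² proper homogeneous ideals,
T = R ⊗_k S, F = I + J + mn, s ≥ 2, 1 ≤ i ≤ s−1. Then:
(1) (I^i ∩ m^s)·n^{s−i} ∩ F^s ⊆ (mn)^{s−i}·F^i in T, and
    {x ∈ I^i ∩ m^s : x·n^{s−i} ⊆ F^s} = m^{s−i}I^i as ideals of R;
(2) if I ≠ (0) then I^i m^{s−i−1} n^{s−i} ⊄ F^s. -/

open MvPolynomial

noncomputable section

/-- An ideal of a polynomial ring is homogeneous if it contains every homogeneous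
component of each of its elements. -/
def IsHomogIdeal {k : Type*} [Field k] {σ : Type*} (I : Ideal (MvPolynomial σ k)) : Prop :=
  ∀ f ∈ I, ∀ d : ℕ, MvPolynomial.homogeneousComponent d f ∈ I

namespace FP17

variable {R₀ : Type*} [CommRing R₀] {τ : Type*}

/-- sum of variables exponents -/
def deg (β : τ →₀ ℕ) : ℕ := β.sum fun _ n => n

lemma deg_add (γ δ : τ →₀ ℕ) : deg (γ + δ) = deg γ + deg δ := by
  simp [deg]; rw [Finsupp.sum_add_index'] <;> simp

lemma deg_single (j : τ) (n : ℕ) : deg (Finsupp.single j n) = n := by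
  simp [deg, Finsupp.sum_single_index]

/-- the ideal of variables -/
def nn (R₀ : Type*) [CommRing R₀] (τ : Type*) : Ideal (MvPolynomial τ R₀) :=
  Ideal.span (Set.range X)

lemma sum_le {α A : Type*} [CommRing A] {s : Finset α} {f : α → Ideal A} {K : Ideal A}
    (h : ∀ x ∈ s, f x ≤ K) : ∑ x ∈ s, f x ≤ K := by
  refine Finset.sum_induction f (fun I => I ≤ K) (fun u v hu hv => ?_) bot_le h
  rw [Submodule.add_eq_sup]; exact sup_le hu hv

lemma le_sum {α A : Type*} [CommRing A] {s : Finset α} {f : α → Ideal A} {x : α}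
    (hx : x ∈ s) : f x ≤ ∑ y ∈ s, f y := by
  classical
  rw [← Finset.add_sum_erase s f hx, Submodule.add_eq_sup]; exact le_sup_left

/-- polynomials with no monomial of degree < c -/
def LL (R₀ : Type*) [CommRing R₀] (τ : Type*) (c : ℕ) : Ideal (MvPolynomial τ R₀) where
  carrier := {w | ∀ β, deg β < c → coeff β w = 0}
  zero_mem' := by intro β _; simp
  add_mem' := by intro u v hu hv β hβ; simp [coeff_add, hu β hβ, hv β hβ]
  smul_mem' := by
    intro t w hw β hβ
    classical
    rw [smul_eq_mul, coeff_mul]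
    refine Finset.sum_eq_zero fun x hx => ?_
    rw [Finset.HasAntidiagonal.mem_antidiagonal] at hx
    have : deg x.2 ≤ deg β := by rw [← hx, deg_add]; omega
    rw [hw x.2 (lt_of_le_of_lt this hβ), mul_zero]

lemma nn_le_LL_one : nn R₀ τ ≤ LL R₀ τ 1 := by
  classical
  rw [nn, Ideal.span_le]
  rintro _ ⟨j, rfl⟩ β hβ
  rw [coeff_X']
  split
  · next h => exfalso; rw [← h, deg_single] at hβ; omega
  · rfl

lemma LL_mul (c₁ c₂ : ℕ) : LL R₀ τ c₁ * LL R₀ τ c₂ ≤ LL R₀ τ (c₁ + c₂) := by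
  rw [Ideal.mul_le]
  intro u hu v hv β hβ
  classical
  rw [coeff_mul]
  refine Finset.sum_eq_zero fun x hx => ?_
  rw [Finset.HasAntidiagonal.mem_antidiagonal] at hx
  have hd : deg x.1 + deg x.2 < c₁ + c₂ := by rw [← deg_add, hx]; exact hβ
  rcases lt_or_ge (deg x.1) c₁ with h | h
  · rw [hu x.1 h, zero_mul]
  · rw [hv x.2 (by omega), mul_zero]

lemma nn_pow_le_LL (c : ℕ) : nn R₀ τ ^ c ≤ LL R₀ τ c := by
  induction c with
  | zero => intro w _ β hβ; omega
  | succ c ih =>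
      calc nn R₀ τ ^ (c+1) = nn R₀ τ ^ c * nn R₀ τ := pow_succ _ _
      _ ≤ LL R₀ τ c * LL R₀ τ 1 := Ideal.mul_mono ih nn_le_LL_one
      _ ≤ LL R₀ τ (c+1) := LL_mul c 1

lemma coeff_zero_of_deg_lt {w : MvPolynomial τ R₀} {c : ℕ} (hw : w ∈ nn R₀ τ ^ c)
    {β : τ →₀ ℕ} (hβ : deg β < c) : coeff β w = 0 :=
  nn_pow_le_LL c hw β hβ

lemma monomial_one_mem (β : τ →₀ ℕ) : (monomial β 1 : MvPolynomial τ R₀) ∈ nn R₀ τ ^ deg β := by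
  classical
  rw [← prod_X_pow_eq_monomial]
  have : ∀ s : Finset τ, (∀ j : τ, j ∈ s → True) → ∏ x ∈ s, (X x : MvPolynomial τ R₀) ^ β x ∈ nn R₀ τ ^ (∑ x ∈ s, β x) := by
    intro s _
    induction s using Finset.induction with
    | empty => simp [Ideal.one_eq_top]
    | @insert j t hj ih =>
        rw [Finset.prod_insert hj, Finset.sum_insert hj, pow_add]
        exact Ideal.mul_mem_mul (Ideal.pow_mem_pow (Ideal.subset_span (Set.mem_range_self j)) _) (ih (fun _ _ => trivial))
  have h2 := this β.support (fun _ _ => trivial)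
  have : deg β = ∑ x ∈ β.support, β x := by rw [deg, Finsupp.sum]
  rw [this]
  exact h2

lemma monomial_mem_pow {β : τ →₀ ℕ} (x : R₀) {c : ℕ} (h : c ≤ deg β) :
    (monomial β x : MvPolynomial τ R₀) ∈ nn R₀ τ ^ c := by
  have : (monomial β x : MvPolynomial τ R₀) = C x * monomial β 1 := by
    rw [C_mul_monomial, mul_one]
  rw [this]
  exact Ideal.mul_mem_left _ _ (Ideal.pow_le_pow_right h (monomial_one_mem β))


section Main
variable (I m : Ideal R₀) (𝕁 : Ideal (MvPolynomial τ R₀))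

/-- the fiber product ideal, coefficient side -/
def FF : Ideal (MvPolynomial τ R₀) := I.map (C : R₀ →+* MvPolynomial τ R₀) + 𝕁 +
  m.map (C : R₀ →+* MvPolynomial τ R₀) * nn R₀ τ

def DD (s : ℕ) : Ideal (MvPolynomial τ R₀) :=
  ∑ p ∈ Finset.range (s+1), ∑ r ∈ Finset.range (s+1-p),
    (I.map (C : R₀ →+* MvPolynomial τ R₀))^p * 𝕁^(s-p-r) *
      (m.map (C : R₀ →+* MvPolynomial τ R₀) * nn R₀ τ)^r

def AA (s d : ℕ) : Ideal R₀ :=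
  ∑ p ∈ Finset.range (s+1), ∑ r ∈ Finset.range (s+1-p),
    if 2*(s-p-r)+r ≤ d then I^p * m^r else ⊥

lemma le_DD {s p r : ℕ} (hp : p ≤ s) (hr : r ≤ s - p) :
    (I.map (C : R₀ →+* MvPolynomial τ R₀))^p * 𝕁^(s-p-r) *
      (m.map (C : R₀ →+* MvPolynomial τ R₀) * nn R₀ τ)^r ≤ DD I m 𝕁 s := by
  refine le_trans ?_ (le_sum (f := fun p => ∑ r ∈ Finset.range (s+1-p),
    (I.map (C : R₀ →+* MvPolynomial τ R₀))^p * 𝕁^(s-p-r) *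
      (m.map (C : R₀ →+* MvPolynomial τ R₀) * nn R₀ τ)^r) (x := p) (Finset.mem_range.2 (by omega)))
  exact le_sum (f := fun r => (I.map (C : R₀ →+* MvPolynomial τ R₀))^p * 𝕁^(s-p-r) *
      (m.map (C : R₀ →+* MvPolynomial τ R₀) * nn R₀ τ)^r) (x := r) (Finset.mem_range.2 (by omega))

lemma FF_pow_le_DD (s : ℕ) : FF I m 𝕁 ^ s ≤ DD I m 𝕁 s := by
  induction s with
  | zero =>
      rw [pow_zero]
      refine le_trans ?_ (le_DD I m 𝕁 (le_refl 0) (le_refl 0))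
      simp [Ideal.one_eq_top]
  | succ s ih =>
      rw [pow_succ]
      refine le_trans (Ideal.mul_mono ih le_rfl) ?_
      rw [FF, mul_add, mul_add, DD, Finset.sum_mul]
      simp only [Finset.sum_mul]
      refine le_trans (le_of_eq (Submodule.add_eq_sup _ _)) (sup_le (le_trans (le_of_eq (Submodule.add_eq_sup _ _)) (sup_le ?_ ?_)) ?_)
      · refine sum_le fun p hp => sum_le fun r hr => ?_
        rw [Finset.mem_range] at hp hr
        have e : ((I.map (C : R₀ →+* MvPolynomial τ R₀))^p * 𝕁^(s-p-r) *
            (m.map (C : R₀ →+* MvPolynomial τ R₀) * nn R₀ τ)^r) * I.map (C : R₀ →+* MvPolynomial τ R₀)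
            = (I.map (C : R₀ →+* MvPolynomial τ R₀))^(p+1) * 𝕁^((s+1)-(p+1)-r) *
            (m.map (C : R₀ →+* MvPolynomial τ R₀) * nn R₀ τ)^r := by
          rw [show (s+1)-(p+1)-r = s-p-r from by omega]; ring
        rw [e]
        exact le_DD I m 𝕁 (by omega) (by omega)
      · refine sum_le fun p hp => sum_le fun r hr => ?_
        rw [Finset.mem_range] at hp hr
        have e : ((I.map (C : R₀ →+* MvPolynomial τ R₀))^p * 𝕁^(s-p-r) *
            (m.map (C : R₀ →+* MvPolynomial τ R₀) * nn R₀ τ)^r) * 𝕁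
            = (I.map (C : R₀ →+* MvPolynomial τ R₀))^p * 𝕁^((s+1)-p-r) *
            (m.map (C : R₀ →+* MvPolynomial τ R₀) * nn R₀ τ)^r := by
          rw [show (s+1)-p-r = (s-p-r)+1 from by omega]; ring
        rw [e]
        exact le_DD I m 𝕁 (by omega) (by omega)
      · refine sum_le fun p hp => sum_le fun r hr => ?_
        rw [Finset.mem_range] at hp hr
        have e : ((I.map (C : R₀ →+* MvPolynomial τ R₀))^p * 𝕁^(s-p-r) *
            (m.map (C : R₀ →+* MvPolynomial τ R₀) * nn R₀ τ)^r) *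
            (m.map (C : R₀ →+* MvPolynomial τ R₀) * nn R₀ τ)
            = (I.map (C : R₀ →+* MvPolynomial τ R₀))^p * 𝕁^((s+1)-p-(r+1)) *
            (m.map (C : R₀ →+* MvPolynomial τ R₀) * nn R₀ τ)^(r+1) := by
          rw [show (s+1)-p-(r+1) = s-p-r from by omega]; ring
        rw [e]
        exact le_DD I m 𝕁 (by omega) (by omega)

lemma le_AA {s d p r : ℕ} (hp : p ≤ s) (hr : r ≤ s - p) (hc : 2*(s-p-r)+r ≤ d) :
    I^p * m^r ≤ AA I m s d := by
  have h0 : (if 2*(s-p-r)+r ≤ d then I^p*m^r else (⊥ : Ideal R₀)) = I^p*m^r := if_pos hc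
  have step1 : (if 2*(s-p-r)+r ≤ d then I^p*m^r else (⊥:Ideal R₀)) ≤
      ∑ r ∈ Finset.range (s+1-p), (if 2*(s-p-r)+r ≤ d then I^p*m^r else ⊥) :=
    le_sum (f := fun r => if 2*(s-p-r)+r ≤ d then I^p*m^r else ⊥) (x := r)
      (Finset.mem_range.2 (by omega))
  have step2 : (∑ r ∈ Finset.range (s+1-p), if 2*(s-p-r)+r ≤ d then I^p*m^r else (⊥:Ideal R₀)) ≤
      AA I m s d :=
    le_sum (f := fun p => ∑ r ∈ Finset.range (s+1-p), if 2*(s-p-r)+r ≤ d then I^p*m^r else ⊥)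
      (x := p) (Finset.mem_range.2 (by omega))
  exact le_trans (le_of_eq h0.symm) (le_trans step1 step2)

lemma AA_mono (s : ℕ) {d d' : ℕ} (h : d ≤ d') : AA I m s d ≤ AA I m s d' := by
  refine sum_le fun p hp => sum_le fun r hr => ?_
  rw [Finset.mem_range] at hp hr
  by_cases hc : 2*(s-p-r)+r ≤ d
  · rw [if_pos hc]
    exact le_AA I m (by omega) (by omega) (by omega)
  · rw [if_neg hc]; exact bot_le

lemma coeff_mem_AA (h𝕁 : 𝕁 ≤ nn R₀ τ ^ 2) {s : ℕ} {w : MvPolynomial τ R₀}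
    (hw : w ∈ FF I m 𝕁 ^ s) (β : τ →₀ ℕ) : coeff β w ∈ AA I m s (deg β) := by
  classical
  have hD := FF_pow_le_DD I m 𝕁 s hw
  let K : Ideal (MvPolynomial τ R₀) :=
    { carrier := {w | ∀ β, coeff β w ∈ AA I m s (deg β)}
      zero_mem' := by intro β; simp only [coeff_zero]; exact Submodule.zero_mem _
      add_mem' := by
        intro u v hu hv β
        rw [coeff_add]; exact Submodule.add_mem _ (hu β) (hv β)
      smul_mem' := by
        intro t u hu β
        rw [smul_eq_mul, coeff_mul]
        refine Submodule.sum_mem _ fun x hx => ?_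
        rw [Finset.HasAntidiagonal.mem_antidiagonal] at hx
        have : deg x.2 ≤ deg β := by rw [← hx, deg_add]; omega
        exact Ideal.mul_mem_left _ _ (AA_mono I m s this (hu x.2)) }
  suffices hK : DD I m 𝕁 s ≤ K from hK hD β
  refine sum_le fun p hp => sum_le fun r hr => ?_
  rw [Finset.mem_range] at hp hr
  intro u hu
  intro β'
  by_cases hc : 2*(s-p-r)+r ≤ deg β'
  · have h1 : (I.map (C : R₀ →+* MvPolynomial τ R₀))^p * 𝕁^(s-p-r) *
        (m.map (C : R₀ →+* MvPolynomial τ R₀) * nn R₀ τ)^r ≤ (I^p * m^r).map (C : R₀ →+* MvPolynomial τ R₀) := by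
      calc (I.map (C : R₀ →+* MvPolynomial τ R₀))^p * 𝕁^(s-p-r) *
          (m.map (C : R₀ →+* MvPolynomial τ R₀) * nn R₀ τ)^r
          = ((I.map (C : R₀ →+* MvPolynomial τ R₀))^p * (m.map (C : R₀ →+* MvPolynomial τ R₀))^r) *
            (𝕁^(s-p-r) * nn R₀ τ ^r) := by ring
        _ ≤ ((I.map (C : R₀ →+* MvPolynomial τ R₀))^p * (m.map (C : R₀ →+* MvPolynomial τ R₀))^r) := Ideal.mul_le_left
        _ = (I^p * m^r).map (C : R₀ →+* MvPolynomial τ R₀) := by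
            rw [Ideal.map_mul, Ideal.map_pow, Ideal.map_pow]
    have := mem_map_C_iff.1 (h1 hu) β'
    exact le_AA I m (by omega) (by omega) hc this
  · have h2 : (I.map (C : R₀ →+* MvPolynomial τ R₀))^p * 𝕁^(s-p-r) *
        (m.map (C : R₀ →+* MvPolynomial τ R₀) * nn R₀ τ)^r ≤ nn R₀ τ ^ (2*(s-p-r)+r) := by
      calc (I.map (C : R₀ →+* MvPolynomial τ R₀))^p * 𝕁^(s-p-r) *
          (m.map (C : R₀ →+* MvPolynomial τ R₀) * nn R₀ τ)^r
          = ((I.map (C : R₀ →+* MvPolynomial τ R₀))^p * (m.map (C : R₀ →+* MvPolynomial τ R₀))^r) *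
            (𝕁^(s-p-r) * nn R₀ τ ^r) := by ring
        _ ≤ 𝕁^(s-p-r) * nn R₀ τ ^ r := Ideal.mul_le_right
        _ ≤ (nn R₀ τ ^ 2)^(s-p-r) * nn R₀ τ ^ r := Ideal.mul_mono (Ideal.pow_right_mono h𝕁 _) le_rfl
        _ = nn R₀ τ ^ (2*(s-p-r)+r) := by rw [← pow_mul, ← pow_add, mul_comm 2 (s-p-r)]
    rw [coeff_zero_of_deg_lt (h2 hu) (by omega)]
    exact Submodule.zero_mem _

lemma term_le (hI2 : I ≤ m^2) {s p r j : ℕ} (hjp : j ≤ p) (h2 : s - j ≤ 2*(p-j)+r) :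
    I^p * m^r ≤ I^j * m^(s-j) := by
  calc I^p * m^r = I^j * (I^(p-j) * m^r) := by
        rw [← mul_assoc, ← pow_add, show j + (p-j) = p from by omega]
    _ ≤ I^j * (m^(2*(p-j)) * m^r) := by
        refine Ideal.mul_mono_right (Ideal.mul_mono ?_ le_rfl)
        refine le_trans (Ideal.pow_right_mono hI2 _) (le_of_eq ?_)
        rw [← pow_mul, mul_comm]
    _ = I^j * m^(2*(p-j)+r) := by rw [pow_add]
    _ ≤ I^j * m^(s-j) := Ideal.mul_mono_right (Ideal.pow_le_pow_right h2)

lemma AA_le_Iim (hI2 : I ≤ m^2) {s i : ℕ} (hs : 2 ≤ s) (hi1 : 1 ≤ i) (his : i ≤ s - 1) :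
    AA I m s (s-i) ≤ I^i * m^(s-i) := by
  refine sum_le fun p hp => sum_le fun r hr => ?_
  rw [Finset.mem_range] at hp hr
  split
  · next hc => exact term_le I m hI2 (by omega) (by omega)
  · exact bot_le

lemma MN_le_FF : m.map (C : R₀ →+* MvPolynomial τ R₀) * nn R₀ τ ≤ FF I m 𝕁 := by
  rw [FF, Submodule.add_eq_sup]; exact le_sup_right

lemma Imap_le_FF : I.map (C : R₀ →+* MvPolynomial τ R₀) ≤ FF I m 𝕁 := by
  rw [FF, Submodule.add_eq_sup, Submodule.add_eq_sup]
  exact le_sup_of_le_left le_sup_left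

lemma incl_j {s i j : ℕ} (hji : j ≤ i) (his : i ≤ s) :
    (I^j * m^(s-j)).map (C : R₀ →+* MvPolynomial τ R₀) * nn R₀ τ ^ (s-j) ≤
      (m.map (C : R₀ →+* MvPolynomial τ R₀) * nn R₀ τ)^(s-i) * FF I m 𝕁 ^ i := by
  calc (I^j * m^(s-j)).map (C : R₀ →+* MvPolynomial τ R₀) * nn R₀ τ ^ (s-j)
      = (I.map (C : R₀ →+* MvPolynomial τ R₀))^j *
        ((m.map (C : R₀ →+* MvPolynomial τ R₀))^(s-j) * nn R₀ τ ^ (s-j)) := by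
        rw [Ideal.map_mul, Ideal.map_pow, Ideal.map_pow]; ring
    _ = (I.map (C : R₀ →+* MvPolynomial τ R₀))^j *
        (m.map (C : R₀ →+* MvPolynomial τ R₀) * nn R₀ τ)^(s-j) := by rw [mul_pow]
    _ = (m.map (C : R₀ →+* MvPolynomial τ R₀) * nn R₀ τ)^(s-i) *
        ((m.map (C : R₀ →+* MvPolynomial τ R₀) * nn R₀ τ)^(i-j) *
          (I.map (C : R₀ →+* MvPolynomial τ R₀))^j) := by
        rw [← mul_assoc, ← pow_add, show (s-i)+(i-j) = s-j from by omega]; ring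
    _ ≤ (m.map (C : R₀ →+* MvPolynomial τ R₀) * nn R₀ τ)^(s-i) * (FF I m 𝕁 ^(i-j) * FF I m 𝕁 ^j) :=
        Ideal.mul_mono_right (Ideal.mul_mono (Ideal.pow_right_mono (MN_le_FF I m 𝕁) _)
          (Ideal.pow_right_mono (Imap_le_FF I m 𝕁) _))
    _ = (m.map (C : R₀ →+* MvPolynomial τ R₀) * nn R₀ τ)^(s-i) * FF I m 𝕁 ^ i := by
        rw [← pow_add, show i-j+j = i from by omega]

lemma monomial_mem_target {s i j : ℕ} (hji : j ≤ i) (his : i ≤ s) {β : τ →₀ ℕ}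
    (hβ : s - j ≤ deg β) {x : R₀} (hx : x ∈ I^j * m^(s-j)) :
    (monomial β x : MvPolynomial τ R₀) ∈
      (m.map (C : R₀ →+* MvPolynomial τ R₀) * nn R₀ τ)^(s-i) * FF I m 𝕁 ^ i := by
  have h1 : (monomial β x : MvPolynomial τ R₀) = C x * monomial β 1 := by
    rw [C_mul_monomial, mul_one]
  rw [h1]
  refine incl_j I m 𝕁 hji his ?_
  exact Ideal.mul_mem_mul (Ideal.mem_map_of_mem _ hx)
    (Ideal.pow_le_pow_right hβ (monomial_one_mem β))

lemma helper1a (hI2 : I ≤ m^2) (h𝕁 : 𝕁 ≤ nn R₀ τ ^ 2) {s i : ℕ}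
    (hs : 2 ≤ s) (hi1 : 1 ≤ i) (his : i ≤ s-1) :
    (I^i ⊓ m^s).map (C : R₀ →+* MvPolynomial τ R₀) * nn R₀ τ ^ (s-i) ⊓ FF I m 𝕁 ^ s ≤
      (m.map (C : R₀ →+* MvPolynomial τ R₀) * nn R₀ τ)^(s-i) * FF I m 𝕁 ^ i := by
  classical
  rintro w ⟨hw1, hw2⟩
  rw [← support_sum_monomial_coeff w]
  refine Ideal.sum_mem _ fun β hβsup => ?_
  have hcoeff : coeff β w ∈ I^i ⊓ m^s := mem_map_C_iff.1 (Ideal.mul_le_left hw1) β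
  have hdeg : s - i ≤ deg β := by
    by_contra hlt
    push_neg at hlt
    exact (mem_support_iff.1 hβsup) (coeff_zero_of_deg_lt (Ideal.mul_le_right hw1) hlt)
  rcases le_or_gt s (deg β) with hds | hds
  · refine monomial_mem_target I m 𝕁 (Nat.zero_le i) (by omega) (by omega) ?_
    rw [pow_zero, one_mul, Nat.sub_zero]
    exact hcoeff.2
  · have hAA : coeff β w ∈ AA I m s (deg β) := coeff_mem_AA I m 𝕁 h𝕁 hw2 β
    let CC : Ideal R₀ :=
      { carrier := {x | (monomial β x : MvPolynomial τ R₀) ∈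
          (m.map (C : R₀ →+* MvPolynomial τ R₀) * nn R₀ τ)^(s-i) * FF I m 𝕁 ^ i}
        zero_mem' := by simp only [Set.mem_setOf_eq, monomial_zero]; exact Submodule.zero_mem _
        add_mem' := by
          intro u v hu hv
          simp only [Set.mem_setOf_eq] at hu hv ⊢
          rw [(monomial β).map_add]
          exact Submodule.add_mem _ hu hv
        smul_mem' := by
          intro r x hx
          simp only [Set.mem_setOf_eq] at hx ⊢
          rw [(monomial β).map_smul, smul_eq_C_mul]
          exact Ideal.mul_mem_left _ _ hx }
    suffices hCC : AA I m s (deg β) ≤ CC from hCC hAA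
    refine sum_le fun p hp => sum_le fun r hr => ?_
    rw [Finset.mem_range] at hp hr
    by_cases hc : 2*(s-p-r)+r ≤ deg β
    · rw [if_pos hc]
      set j := min i (min p (p - (s - p - r))) with hj
      have hterm : I^p * m^r ≤ I^j * m^(s-j) := term_le I m hI2 (by omega) (by omega)
      intro x hx
      exact monomial_mem_target I m 𝕁 (by omega) (by omega) (by omega) (hterm hx)
    · rw [if_neg hc]
      exact bot_le

lemma helper1b (hI2 : I ≤ m^2) (h𝕁 : 𝕁 ≤ nn R₀ τ ^ 2) {s i : ℕ}
    (hs : 2 ≤ s) (hi1 : 1 ≤ i) (his : i ≤ s-1) {x : R₀} {j0 : τ}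
    (h : C x * (X j0 : MvPolynomial τ R₀)^(s-i) ∈ FF I m 𝕁 ^ s) : x ∈ I^i * m^(s-i) := by
  classical
  have h1 := coeff_mem_AA I m 𝕁 h𝕁 h (Finsupp.single j0 (s-i))
  rw [X_pow_eq_monomial, C_mul_monomial, mul_one, coeff_monomial, if_pos rfl, deg_single] at h1
  exact AA_le_Iim I m hI2 hs hi1 his h1

end Main

section KLemmas

variable {k : Type*} [Field k] {σ : Type*}

lemma mxI_eq_nn : mxI k σ = FP17.nn k σ := rfl

lemma deg_eq_degree (β : σ →₀ ℕ) : FP17.deg β = β.degree := rfl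

/-- a nonzero homogeneous ideal has a minimal-degree nonzero homogeneous element -/
lemma exists_min_deg (I : Ideal (MvPolynomial σ k)) (hne : I ≠ ⊥) (hhom : IsHomogIdeal I) :
    ∃ e f, f ∈ I ∧ f ≠ 0 ∧ MvPolynomial.IsHomogeneous f e ∧ I ≤ mxI k σ ^ e := by
  classical
  obtain ⟨g, hgI, hg0⟩ := Submodule.exists_mem_ne_zero_of_ne_bot hne
  obtain ⟨β₀, hβ₀⟩ := ne_zero_iff.1 hg0
  have hP : ∃ e : ℕ, ∃ f, f ∈ I ∧ f ≠ 0 ∧ MvPolynomial.IsHomogeneous f e := by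
    refine ⟨β₀.degree, homogeneousComponent β₀.degree g, hhom g hgI _, ?_, homogeneousComponent_isHomogeneous _ _⟩
    intro h0
    apply hβ₀
    have := coeff_homogeneousComponent (n := β₀.degree) (φ := g) β₀
    rw [h0, if_pos rfl] at this
    simpa using this.symm
  obtain ⟨f, hfI, hf0, hfhom⟩ := Nat.find_spec hP
  refine ⟨Nat.find hP, f, hfI, hf0, hfhom, ?_⟩
  intro g' hg'
  rw [show g' = ∑ β ∈ g'.support, monomial β (coeff β g') from (support_sum_monomial_coeff g').symm]
  refine Ideal.sum_mem _ fun β hβ => ?_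
  rw [mxI_eq_nn]
  refine FP17.monomial_mem_pow _ ?_
  rw [deg_eq_degree]
  refine Nat.find_min' hP ⟨homogeneousComponent β.degree g', hhom g' hg' _, ?_, homogeneousComponent_isHomogeneous _ _⟩
  intro h0
  apply mem_support_iff.1 hβ
  have := coeff_homogeneousComponent (n := β.degree) (φ := g') β
  rw [h0, if_pos rfl] at this
  simpa using this.symm

end KLemmas

end FP17

theorem fiberProduct_colon_lemma
    (k : Type*) [Field k] (a b : ℕ) (ha : 0 < a) (hb : 0 < b)
    (I : Ideal (MvPolynomial (Fin a) k)) (hIm : I ≤ mxI k (Fin a) ^ 2)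
    (hIproper : I ≠ ⊤) (hIhom : IsHomogIdeal I)
    (J : Ideal (MvPolynomial (Fin b) k)) (hJn : J ≤ mxI k (Fin b) ^ 2)
    (hJproper : J ≠ ⊤) (hJhom : IsHomogIdeal J)
    (I' J' m' n' : Ideal (MvPolynomial (Fin a ⊕ Fin b) k))
    (hI' : I' = Ideal.map (rename (Sum.inl : Fin a → Fin a ⊕ Fin b) :
      MvPolynomial (Fin a) k →ₐ[k] MvPolynomial (Fin a ⊕ Fin b) k) I)
    (hJ' : J' = Ideal.map (rename (Sum.inr : Fin b → Fin a ⊕ Fin b) :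
      MvPolynomial (Fin b) k →ₐ[k] MvPolynomial (Fin a ⊕ Fin b) k) J)
    (hm' : m' = Ideal.map (rename (Sum.inl : Fin a → Fin a ⊕ Fin b) :
      MvPolynomial (Fin a) k →ₐ[k] MvPolynomial (Fin a ⊕ Fin b) k) (mxI k (Fin a)))
    (hn' : n' = Ideal.map (rename (Sum.inr : Fin b → Fin a ⊕ Fin b) :
      MvPolynomial (Fin b) k →ₐ[k] MvPolynomial (Fin a ⊕ Fin b) k) (mxI k (Fin b)))
    (F : Ideal (MvPolynomial (Fin a ⊕ Fin b) k)) (hF : F = I' + J' + m' * n')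
    (s i : ℕ) (hs : 2 ≤ s) (hi1 : 1 ≤ i) (his : i ≤ s - 1) :
    ((I' ^ i ⊓ m' ^ s) * n' ^ (s - i) ⊓ F ^ s ≤ (m' * n') ^ (s - i) * F ^ i ∧
      Ideal.comap (rename (Sum.inl : Fin a → Fin a ⊕ Fin b) :
          MvPolynomial (Fin a) k →ₐ[k] MvPolynomial (Fin a ⊕ Fin b) k)
          (Submodule.colon (F ^ s) ((n' ^ (s - i) : Ideal (MvPolynomial (Fin a ⊕ Fin b) k)) : Set (MvPolynomial (Fin a ⊕ Fin b) k))) ⊓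
        (I ^ i ⊓ mxI k (Fin a) ^ s) =
      mxI k (Fin a) ^ (s - i) * I ^ i) ∧
    (I ≠ ⊥ → ¬ (I' ^ i * m' ^ (s - i - 1) * n' ^ (s - i) ≤ F ^ s)) := by
  classical
  -- the algebra equivalence T ≃ T₀ = (k[x])[y]
  let ee : MvPolynomial (Fin a ⊕ Fin b) k ≃ₐ[k] MvPolynomial (Fin b) (MvPolynomial (Fin a) k) :=
    (renameEquiv k (Equiv.sumComm (Fin a) (Fin b))).trans (sumAlgEquiv k (Fin b) (Fin a))
  let ering : MvPolynomial (Fin a ⊕ Fin b) k ≃+* MvPolynomial (Fin b) (MvPolynomial (Fin a) k) := ee.toRingEquiv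
  have hcomp1 : ∀ f : (MvPolynomial (Fin a) k), (ering : MvPolynomial (Fin a ⊕ Fin b) k →+* MvPolynomial (Fin b) (MvPolynomial (Fin a) k)) (rename Sum.inl f) = C f := by
    intro f
    have h : ee.toAlgHom.comp (rename (Sum.inl : Fin a → Fin a ⊕ Fin b)) =
        IsScalarTower.toAlgHom k (MvPolynomial (Fin a) k) (MvPolynomial (Fin b) (MvPolynomial (Fin a) k)) := by
      ext i
      simp [ee]
    calc (ering : MvPolynomial (Fin a ⊕ Fin b) k →+* MvPolynomial (Fin b) (MvPolynomial (Fin a) k)) (rename Sum.inl f)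
        = (ee.toAlgHom.comp (rename (Sum.inl : Fin a → Fin a ⊕ Fin b))) f := rfl
      _ = C f := by rw [h]; rfl
  have hcomp2 : ∀ g : MvPolynomial (Fin b) k,
      (ering : MvPolynomial (Fin a ⊕ Fin b) k →+* MvPolynomial (Fin b) (MvPolynomial (Fin a) k)) (rename Sum.inr g) = MvPolynomial.map (algebraMap k (MvPolynomial (Fin a) k)) g := by
    intro g
    have h : ee.toAlgHom.comp (rename (Sum.inr : Fin b → Fin a ⊕ Fin b)) =
        mapAlgHom (Algebra.ofId k (MvPolynomial (Fin a) k)) := by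
      ext i
      simp [ee]
    calc (ering : MvPolynomial (Fin a ⊕ Fin b) k →+* MvPolynomial (Fin b) (MvPolynomial (Fin a) k)) (rename Sum.inr g)
        = (ee.toAlgHom.comp (rename (Sum.inr : Fin b → Fin a ⊕ Fin b))) g := rfl
      _ = _ := by rw [h]; rfl
  -- images of the key ideals
  have keyl : ∀ A : Ideal (MvPolynomial (Fin a) k), Ideal.map (ering : MvPolynomial (Fin a ⊕ Fin b) k →+* MvPolynomial (Fin b) (MvPolynomial (Fin a) k))
      (Ideal.map (rename (Sum.inl : Fin a → Fin a ⊕ Fin b) :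
        (MvPolynomial (Fin a) k) →ₐ[k] MvPolynomial (Fin a ⊕ Fin b) k) A) =
      A.map (C : (MvPolynomial (Fin a) k) →+* MvPolynomial (Fin b) (MvPolynomial (Fin a) k)) := by
    intro A
    have h1 : Ideal.map (rename (Sum.inl : Fin a → Fin a ⊕ Fin b) :
        (MvPolynomial (Fin a) k) →ₐ[k] MvPolynomial (Fin a ⊕ Fin b) k) A =
        Ideal.span (⇑(rename (Sum.inl : Fin a → Fin a ⊕ Fin b) :
          (MvPolynomial (Fin a) k) →ₐ[k] MvPolynomial (Fin a ⊕ Fin b) k) '' A) := rfl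
    have h2 : A.map (C : (MvPolynomial (Fin a) k) →+*
        MvPolynomial (Fin b) (MvPolynomial (Fin a) k)) = Ideal.span
        (⇑(C : (MvPolynomial (Fin a) k) →+* MvPolynomial (Fin b) (MvPolynomial (Fin a) k)) '' A) := rfl
    rw [h1, h2, Ideal.map_span, ← Set.image_comp]
    have h3 : (⇑(ering : MvPolynomial (Fin a ⊕ Fin b) k →+* MvPolynomial (Fin b) (MvPolynomial (Fin a) k)) ∘ ⇑(rename (Sum.inl : Fin a → Fin a ⊕ Fin b) :
        (MvPolynomial (Fin a) k) →ₐ[k] MvPolynomial (Fin a ⊕ Fin b) k)) =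
        ⇑(C : (MvPolynomial (Fin a) k) →+* MvPolynomial (Fin b) (MvPolynomial (Fin a) k)) :=
      funext fun x => hcomp1 x
    rw [h3]
  have keyr : ∀ B : Ideal (MvPolynomial (Fin b) k),
      Ideal.map (ering : MvPolynomial (Fin a ⊕ Fin b) k →+* MvPolynomial (Fin b) (MvPolynomial (Fin a) k)) (Ideal.map (rename (Sum.inr : Fin b → Fin a ⊕ Fin b) :
        MvPolynomial (Fin b) k →ₐ[k] MvPolynomial (Fin a ⊕ Fin b) k) B) =
      B.map (MvPolynomial.map (algebraMap k (MvPolynomial (Fin a) k)) :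
        MvPolynomial (Fin b) k →+* MvPolynomial (Fin b) (MvPolynomial (Fin a) k)) := by
    intro B
    have h1 : Ideal.map (rename (Sum.inr : Fin b → Fin a ⊕ Fin b) :
        MvPolynomial (Fin b) k →ₐ[k] MvPolynomial (Fin a ⊕ Fin b) k) B =
        Ideal.span (⇑(rename (Sum.inr : Fin b → Fin a ⊕ Fin b) :
          MvPolynomial (Fin b) k →ₐ[k] MvPolynomial (Fin a ⊕ Fin b) k) '' B) := rfl
    have h2 : B.map (MvPolynomial.map (algebraMap k (MvPolynomial (Fin a) k)) :
        MvPolynomial (Fin b) k →+* MvPolynomial (Fin b) (MvPolynomial (Fin a) k)) = Ideal.span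
        (⇑(MvPolynomial.map (algebraMap k (MvPolynomial (Fin a) k)) :
          MvPolynomial (Fin b) k →+* MvPolynomial (Fin b) (MvPolynomial (Fin a) k)) '' B) := rfl
    rw [h1, h2, Ideal.map_span, ← Set.image_comp]
    have h3 : (⇑(ering : MvPolynomial (Fin a ⊕ Fin b) k →+* MvPolynomial (Fin b) (MvPolynomial (Fin a) k)) ∘ ⇑(rename (Sum.inr : Fin b → Fin a ⊕ Fin b) :
        MvPolynomial (Fin b) k →ₐ[k] MvPolynomial (Fin a ⊕ Fin b) k)) =
        ⇑(MvPolynomial.map (algebraMap k (MvPolynomial (Fin a) k)) :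
          MvPolynomial (Fin b) k →+* MvPolynomial (Fin b) (MvPolynomial (Fin a) k)) :=
      funext fun x => hcomp2 x
    rw [h3]
  have hspan : Ideal.map (MvPolynomial.map (algebraMap k (MvPolynomial (Fin a) k)) :
      MvPolynomial (Fin b) k →+* MvPolynomial (Fin b) (MvPolynomial (Fin a) k)) (mxI k (Fin b)) =
      FP17.nn (MvPolynomial (Fin a) k) (Fin b) := by
    rw [mxI, FP17.nn, Ideal.map_span, ← Set.range_comp]
    have h : (MvPolynomial.map (algebraMap k (MvPolynomial (Fin a) k))) ∘ (X : Fin b → MvPolynomial (Fin b) k) =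
        (X : Fin b → MvPolynomial (Fin b) (MvPolynomial (Fin a) k)) := funext fun j => MvPolynomial.map_X _ j
    rw [h]
  have hII : Ideal.map (ering : MvPolynomial (Fin a ⊕ Fin b) k →+* MvPolynomial (Fin b) (MvPolynomial (Fin a) k)) I' = I.map (C : (MvPolynomial (Fin a) k) →+* MvPolynomial (Fin b) (MvPolynomial (Fin a) k)) := by
    rw [hI']; exact keyl I
  have hmm' : Ideal.map (ering : MvPolynomial (Fin a ⊕ Fin b) k →+* MvPolynomial (Fin b) (MvPolynomial (Fin a) k)) m' = (mxI k (Fin a)).map (C : (MvPolynomial (Fin a) k) →+* MvPolynomial (Fin b) (MvPolynomial (Fin a) k)) := by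
    rw [hm']; exact keyl (mxI k (Fin a))
  have hJJ : Ideal.map (ering : MvPolynomial (Fin a ⊕ Fin b) k →+* MvPolynomial (Fin b) (MvPolynomial (Fin a) k)) J' = J.map (MvPolynomial.map (algebraMap k (MvPolynomial (Fin a) k)) :
      MvPolynomial (Fin b) k →+* MvPolynomial (Fin b) (MvPolynomial (Fin a) k)) := by
    rw [hJ']; exact keyr J
  have hnn : Ideal.map (ering : MvPolynomial (Fin a ⊕ Fin b) k →+* MvPolynomial (Fin b) (MvPolynomial (Fin a) k)) n' = FP17.nn (MvPolynomial (Fin a) k) (Fin b) := by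
    rw [hn', keyr, hspan]
  have hJ2 : J.map (MvPolynomial.map (algebraMap k (MvPolynomial (Fin a) k)) :
      MvPolynomial (Fin b) k →+* MvPolynomial (Fin b) (MvPolynomial (Fin a) k)) ≤ FP17.nn (MvPolynomial (Fin a) k) (Fin b) ^ 2 := by
    have h := Ideal.map_mono (f := (MvPolynomial.map (algebraMap k (MvPolynomial (Fin a) k)) :
      MvPolynomial (Fin b) k →+* MvPolynomial (Fin b) (MvPolynomial (Fin a) k))) hJn
    rwa [Ideal.map_pow, hspan] at h
  have hFF : Ideal.map (ering : MvPolynomial (Fin a ⊕ Fin b) k →+* MvPolynomial (Fin b) (MvPolynomial (Fin a) k)) F = FP17.FF I (mxI k (Fin a))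
      (J.map (MvPolynomial.map (algebraMap k (MvPolynomial (Fin a) k)) :
        MvPolynomial (Fin b) k →+* MvPolynomial (Fin b) (MvPolynomial (Fin a) k))) := by
    rw [hF, Submodule.add_eq_sup, Submodule.add_eq_sup, Ideal.map_sup, Ideal.map_sup,
      Ideal.map_mul, hII, hJJ, hmm', hnn, FP17.FF, Submodule.add_eq_sup, Submodule.add_eq_sup]
  have le_iff : ∀ P Q : Ideal (MvPolynomial (Fin a ⊕ Fin b) k),
      P ≤ Q ↔ Ideal.map (ering : MvPolynomial (Fin a ⊕ Fin b) k →+* MvPolynomial (Fin b) (MvPolynomial (Fin a) k)) P ≤ Ideal.map (ering : MvPolynomial (Fin a ⊕ Fin b) k →+* MvPolynomial (Fin b) (MvPolynomial (Fin a) k)) Q := by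
    intro P Q
    constructor
    · exact Ideal.map_mono
    · intro h
      have h2 := Ideal.map_mono (f := (ering.symm :
        MvPolynomial (Fin b) (MvPolynomial (Fin a) k) →+* MvPolynomial (Fin a ⊕ Fin b) k)) h
      rwa [Ideal.map_of_equiv ering, Ideal.map_of_equiv ering] at h2
  have map_inf : ∀ P Q : Ideal (MvPolynomial (Fin a ⊕ Fin b) k),
      Ideal.map (ering : MvPolynomial (Fin a ⊕ Fin b) k →+* MvPolynomial (Fin b) (MvPolynomial (Fin a) k)) (P ⊓ Q) = Ideal.map (ering : MvPolynomial (Fin a ⊕ Fin b) k →+* MvPolynomial (Fin b) (MvPolynomial (Fin a) k)) P ⊓ Ideal.map (ering : MvPolynomial (Fin a ⊕ Fin b) k →+* MvPolynomial (Fin b) (MvPolynomial (Fin a) k)) Q := by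
    intro P Q
    rw [Ideal.map_comap_of_equiv ering, Ideal.map_comap_of_equiv ering,
      Ideal.map_comap_of_equiv ering, Ideal.comap_inf]
  have mapCinf : ∀ A B : Ideal (MvPolynomial (Fin a) k), (A ⊓ B).map (C : (MvPolynomial (Fin a) k) →+* MvPolynomial (Fin b) (MvPolynomial (Fin a) k)) =
      A.map (C : (MvPolynomial (Fin a) k) →+* MvPolynomial (Fin b) (MvPolynomial (Fin a) k)) ⊓ B.map (C : (MvPolynomial (Fin a) k) →+* MvPolynomial (Fin b) (MvPolynomial (Fin a) k)) := by
    intro A B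
    ext f
    simp only [Ideal.mem_inf, mem_map_C_iff]
    exact ⟨fun h => ⟨fun β => (h β).1, fun β => (h β).2⟩, fun h β => ⟨h.1 β, h.2 β⟩⟩
  refine ⟨⟨?_, ?_⟩, ?_⟩
  · -- part (1a)
    rw [le_iff]
    simp only [map_inf, Ideal.map_mul, Ideal.map_pow]
    simp only [hII, hmm', hnn, hFF]
    rw [← Ideal.map_pow, ← Ideal.map_pow, ← mapCinf]
    exact FP17.helper1a I (mxI k (Fin a)) _ hIm hJ2 hs hi1 his
  · -- part (1b)
    apply le_antisymm
    · intro x hx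
      have hy : (rename (Sum.inr : Fin b → Fin a ⊕ Fin b) (X (⟨0, hb⟩ : Fin b)) :
          MvPolynomial (Fin a ⊕ Fin b) k)^(s-i) ∈ n'^(s-i) := by
        refine Ideal.pow_mem_pow ?_ _
        rw [hn']
        exact Ideal.mem_map_of_mem _ (Ideal.subset_span (Set.mem_range_self _))
      have hz : rename Sum.inl x * (rename (Sum.inr : Fin b → Fin a ⊕ Fin b)
          (X (⟨0, hb⟩ : Fin b)))^(s-i) ∈ F^s := by
        have h := Submodule.mem_colon.1 (Ideal.mem_comap.mp hx.1) _ hy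
        rwa [smul_eq_mul] at h
      have hw : (C x : MvPolynomial (Fin b) (MvPolynomial (Fin a) k)) * (X (⟨0, hb⟩ : Fin b) :
          MvPolynomial (Fin b) (MvPolynomial (Fin a) k))^(s-i) ∈ FP17.FF I (mxI k (Fin a))
          (J.map (MvPolynomial.map (algebraMap k (MvPolynomial (Fin a) k)) :
            MvPolynomial (Fin b) k →+* MvPolynomial (Fin b) (MvPolynomial (Fin a) k))) ^ s := by
        have h2 := Ideal.mem_map_of_mem (ering : MvPolynomial (Fin a ⊕ Fin b) k →+* MvPolynomial (Fin b) (MvPolynomial (Fin a) k)) hz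
        rw [Ideal.map_pow, hFF] at h2
        rw [map_mul, map_pow, hcomp1 x, hcomp2 (X (⟨0, hb⟩ : Fin b)),
          MvPolynomial.map_X] at h2
        exact h2
      have h3 := FP17.helper1b I (mxI k (Fin a)) _ hIm hJ2 hs hi1 his hw
      rw [mul_comm] at h3
      exact h3
    · intro x hx
      have hxI : x ∈ I^i := Ideal.mul_le_right hx
      have hxm : x ∈ mxI k (Fin a)^s := by
        have hincl : mxI k (Fin a)^(s-i) * I^i ≤ mxI k (Fin a)^s := by
          calc mxI k (Fin a)^(s-i) * I^i
              ≤ mxI k (Fin a)^(s-i) * (mxI k (Fin a)^2)^i :=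
                Ideal.mul_mono_right (Ideal.pow_right_mono hIm i)
            _ = mxI k (Fin a)^(s-i+2*i) := by rw [← pow_mul, ← pow_add]
            _ ≤ mxI k (Fin a)^s := Ideal.pow_le_pow_right (by omega)
        exact hincl hx
      refine ⟨Ideal.mem_comap.2 ?_, hxI, hxm⟩
      rw [Submodule.mem_colon]
      intro p hp
      rw [smul_eq_mul]
      have hx' : rename (Sum.inl : Fin a → Fin a ⊕ Fin b) x ∈ m'^(s-i) * I'^i := by
        rw [hm', hI', ← Ideal.map_pow, ← Ideal.map_pow, ← Ideal.map_mul]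
        exact Ideal.mem_map_of_mem _ hx
      have hincl2 : (m'^(s-i) * I'^i) * n'^(s-i) ≤ F^s := by
        have hmnF : m' * n' ≤ F := by
          rw [hF, Submodule.add_eq_sup]; exact le_sup_right
        have hIF : I' ≤ F := by
          rw [hF, Submodule.add_eq_sup, Submodule.add_eq_sup]
          exact le_sup_of_le_left le_sup_left
        calc (m'^(s-i) * I'^i) * n'^(s-i) = (m'*n')^(s-i) * I'^i := by rw [mul_pow]; ring
          _ ≤ F^(s-i) * F^i :=
            Ideal.mul_mono (Ideal.pow_right_mono hmnF _) (Ideal.pow_right_mono hIF _)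
          _ = F^s := by rw [← pow_add, show s-i+i = s from by omega]
      exact hincl2 (Ideal.mul_mem_mul hx' hp)
  · -- part (2)
    intro hIne hle
    obtain ⟨e0, f, hfI, hf0, hfhom, hIle⟩ := FP17.exists_min_deg I hIne hIhom
    have hu' : (rename (Sum.inl : Fin a → Fin a ⊕ Fin b)
        (f^i * X (⟨0, ha⟩ : Fin a)^(s-i-1)) : MvPolynomial (Fin a ⊕ Fin b) k) *
        (rename (Sum.inr : Fin b → Fin a ⊕ Fin b) (X (⟨0, hb⟩ : Fin b)))^(s-i) ∈
        I'^i * m'^(s-i-1) * n'^(s-i) := by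
      rw [map_mul, map_pow, map_pow]
      refine Ideal.mul_mem_mul (Ideal.mul_mem_mul ?_ ?_) ?_
      · refine Ideal.pow_mem_pow ?_ i
        rw [hI']; exact Ideal.mem_map_of_mem _ hfI
      · refine Ideal.pow_mem_pow ?_ _
        rw [hm']; exact Ideal.mem_map_of_mem _ (Ideal.subset_span (Set.mem_range_self _))
      · refine Ideal.pow_mem_pow ?_ _
        rw [hn']; exact Ideal.mem_map_of_mem _ (Ideal.subset_span (Set.mem_range_self _))
    have hz2 := hle hu'
    have hw2 : (C (f^i * X (⟨0, ha⟩ : Fin a)^(s-i-1)) : MvPolynomial (Fin b) (MvPolynomial (Fin a) k)) *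
        (X (⟨0, hb⟩ : Fin b) : MvPolynomial (Fin b) (MvPolynomial (Fin a) k))^(s-i) ∈
        FP17.FF I (mxI k (Fin a)) (J.map (MvPolynomial.map (algebraMap k (MvPolynomial (Fin a) k)) :
          MvPolynomial (Fin b) k →+* MvPolynomial (Fin b) (MvPolynomial (Fin a) k))) ^ s := by
      have h2 := Ideal.mem_map_of_mem (ering : MvPolynomial (Fin a ⊕ Fin b) k →+* MvPolynomial (Fin b) (MvPolynomial (Fin a) k)) hz2
      rw [Ideal.map_pow, hFF] at h2
      rw [map_mul, map_pow, hcomp1 (f^i * X (⟨0, ha⟩ : Fin a)^(s-i-1)),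
        hcomp2 (X (⟨0, hb⟩ : Fin b)), MvPolynomial.map_X] at h2
      exact h2
    have hu2 := FP17.helper1b I (mxI k (Fin a)) _ hIm hJ2 hs hi1 his hw2
    have hle2 : I^i * mxI k (Fin a)^(s-i) ≤ mxI k (Fin a) ^ (e0*i + (s-i)) := by
      calc I^i * mxI k (Fin a)^(s-i)
          ≤ (mxI k (Fin a)^e0)^i * mxI k (Fin a)^(s-i) :=
            Ideal.mul_mono_left (Ideal.pow_right_mono hIle i)
        _ = mxI k (Fin a)^(e0*i + (s-i)) := by rw [← pow_mul, ← pow_add]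
    have hu3 := hle2 hu2
    have hhom2 : (f^i * X (⟨0, ha⟩ : Fin a)^(s-i-1)).IsHomogeneous (e0*i + (s-i-1)) :=
      (hfhom.pow i).mul (isHomogeneous_X_pow (⟨0, ha⟩ : Fin a) (s-i-1))
    have hne2 : f^i * X (⟨0, ha⟩ : Fin a)^(s-i-1) ≠ 0 :=
      mul_ne_zero (pow_ne_zero _ hf0) (pow_ne_zero _ (X_ne_zero _))
    obtain ⟨β, hβ⟩ := ne_zero_iff.1 hne2
    have hdb : β.degree = e0*i + (s-i-1) := by
      by_contra hned
      exact hβ (hhom2.coeff_eq_zero hned)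
    apply hβ
    rw [FP17.mxI_eq_nn] at hu3
    refine FP17.coeff_zero_of_deg_lt hu3 ?_
    rw [FP17.deg_eq_degree, hdb]
    omega

end
end

section
/- Let k be a field, let R and S be polynomial rings over k in at least one variable each, with graded maximal ideals m and n, let I ⊆ m² and J ⊆ n² be proper homogeneous ideals, let T = R ⊗_k S with graded maximal ideal p = mT + nT, and let F = I + J + mn ⊆ T. For s ≥ 1 set U_s = (I + n)^s ∩ (J + m)^s. Then p^{2s−1}·U_s ⊆ F^s ⊆ U_s; in particular the T-module U_s/F^s has finite length. -/
open MvPolynomial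

noncomputable section

namespace FP19

open Ideal Finsupp

set_option maxHeartbeats 1000000
set_option linter.unusedSectionVars false

section CommRingAux

variable {k : Type*} [CommRing k] [Nontrivial k] {σ : Type*}

/-- The ideal of polynomials all of whose monomials have `w`-weight at least `t`. -/
def lowDeg (w : σ → ℕ) (t : ℕ) : Ideal (MvPolynomial σ k) where
  carrier := {g | ∀ μ ∈ g.support, t ≤ Finsupp.weight w μ}
  zero_mem' := by simp
  add_mem' := by
    classical
    intro f g hf hg μ hμ
    rcases Finset.mem_union.mp (MvPolynomial.support_add hμ) with h | h
    exacts [hf μ h, hg μ h]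
  smul_mem' := by
    classical
    intro c f hf μ hμ
    rw [smul_eq_mul] at hμ
    obtain ⟨μ₁, h1, μ₂, h2, rfl⟩ := Finset.mem_add.mp (MvPolynomial.support_mul c f hμ)
    have h3 := hf μ₂ h2
    have h4 : Finsupp.weight w (μ₁ + μ₂) = Finsupp.weight w μ₁ + Finsupp.weight w μ₂ :=
      map_add _ _ _
    omega

lemma mem_lowDeg {w : σ → ℕ} {t : ℕ} {g : MvPolynomial σ k} :
    g ∈ (lowDeg w t : Ideal (MvPolynomial σ k)) ↔ ∀ μ ∈ g.support, t ≤ Finsupp.weight w μ :=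
  Iff.rfl

lemma lowDeg_mul_le (w : σ → ℕ) (t₁ t₂ : ℕ) :
    (lowDeg w t₁ : Ideal (MvPolynomial σ k)) * lowDeg w t₂ ≤ lowDeg w (t₁ + t₂) := by
  classical
  rw [Ideal.mul_le]
  intro f hf g hg μ hμ
  obtain ⟨μ₁, h1, μ₂, h2, rfl⟩ := Finset.mem_add.mp (MvPolynomial.support_mul f g hμ)
  have h3 := hf μ₁ h1
  have h4 := hg μ₂ h2
  have h5 : Finsupp.weight w (μ₁ + μ₂) = Finsupp.weight w μ₁ + Finsupp.weight w μ₂ :=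
    map_add _ _ _
  omega

lemma span_le_lowDeg {s : Set σ} {w : σ → ℕ} (hw : ∀ v ∈ s, 1 ≤ w v) :
    Ideal.span (X '' s) ≤ (lowDeg w 1 : Ideal (MvPolynomial σ k)) := by
  classical
  rw [Ideal.span_le]
  rintro _ ⟨v, hv, rfl⟩ μ hμ
  rw [MvPolynomial.support_X] at hμ
  have : μ = Finsupp.single v 1 := by simpa using hμ
  subst this
  have : Finsupp.weight w (Finsupp.single v 1) = w v := by
    rw [Finsupp.weight_apply, Finsupp.sum_single_index (by simp), one_smul]
  rw [this]; exact hw v hv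

lemma pow_span_le_lowDeg {s : Set σ} {w : σ → ℕ} (hw : ∀ v ∈ s, 1 ≤ w v) (t : ℕ) :
    (Ideal.span (X '' s))^t ≤ (lowDeg w t : Ideal (MvPolynomial σ k)) := by
  induction t with
  | zero => intro g _ μ _; exact Nat.zero_le _
  | succ t ih =>
      rw [pow_succ]
      exact le_trans (Ideal.mul_mono ih (span_le_lowDeg hw)) (lowDeg_mul_le w t 1)

lemma monomial_mem_pow_span (s : Set σ) (μ : σ →₀ ℕ) (hμ : ∀ v ∈ μ.support, v ∈ s) (c : k) :
    monomial μ c ∈ (Ideal.span (X '' s) : Ideal (MvPolynomial σ k)) ^ (Finsupp.degree μ) := by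
  classical
  induction μ using Finsupp.induction with
  | zero => simp [Ideal.one_eq_top]
  | single_add a n f han hn ih =>
      have hdeg : Finsupp.degree (Finsupp.single a n + f) = n + Finsupp.degree f := by
        simp only [Finsupp.degree_eq_weight_one, map_add]
        congr 1
        rw [Finsupp.weight_apply, Finsupp.sum_single_index (by simp)]
        simp
      have hmono : (monomial (Finsupp.single a n + f) c : MvPolynomial σ k)
          = (X a ^ n) * monomial f c := by
        rw [X_pow_eq_monomial, monomial_mul, one_mul]
      rw [hdeg, pow_add, hmono]
      have ha_mem : a ∈ s := by
        apply hμ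
        rw [Finsupp.mem_support_iff, Finsupp.add_apply, Finsupp.single_eq_same,
          Finsupp.notMem_support_iff.mp han]
        omega
      refine Ideal.mul_mem_mul (Ideal.pow_mem_pow (Ideal.subset_span
        (show (X a : MvPolynomial σ k) ∈ X '' s from ⟨a, ha_mem, rfl⟩)) n) (ih ?_)
      intro v hv
      apply hμ
      rw [Finsupp.mem_support_iff, Finsupp.add_apply]
      have := Finsupp.mem_support_iff.mp hv
      omega

lemma degree_filter_eq_weight (w : σ → ℕ) (p : σ → Prop) [DecidablePred p]
    (hw : ∀ v, w v = if p v then 1 else 0) (μ : σ →₀ ℕ) :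
    Finsupp.degree (μ.filter p) = Finsupp.weight w μ := by
  classical
  have h1 : Finsupp.degree (μ.filter p) = ∑ v ∈ μ.support.filter p, μ v := by
    rw [Finsupp.degree_apply, Finsupp.support_filter]
    exact Finset.sum_congr rfl (fun v hv => Finsupp.filter_apply_pos _ _ (Finset.mem_filter.mp hv).2)
  rw [h1, Finset.sum_filter, Finsupp.weight_apply, Finsupp.sum]
  apply Finset.sum_congr rfl
  intro v _
  rw [hw v]
  split <;> simp

lemma isWH_mem_pow_span (w : σ → ℕ) (s : Set σ) [DecidablePred (· ∈ s)]
    (hw : ∀ v, w v = if v ∈ s then 1 else 0) {f : MvPolynomial σ k} {q : ℕ}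
    (hf : IsWeightedHomogeneous w f q) :
    f ∈ (Ideal.span (X '' s) : Ideal (MvPolynomial σ k)) ^ q := by
  classical
  nth_rewrite 1 [f.as_sum]
  apply Ideal.sum_mem
  intro μ hμ
  have hq : Finsupp.degree (μ.filter (· ∈ s)) = q := by
    rw [degree_filter_eq_weight w _ hw μ]
    exact hf (MvPolynomial.mem_support_iff.mp hμ)
  have hsplit : monomial (μ.filter fun v => ¬ v ∈ s) (coeff μ f) * monomial (μ.filter (· ∈ s)) 1
      = (monomial μ (coeff μ f) : MvPolynomial σ k) := by
    rw [monomial_mul, mul_one, add_comm, Finsupp.filter_pos_add_filter_neg]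
  rw [← hsplit]
  apply Ideal.mul_mem_left
  rw [← hq]
  apply monomial_mem_pow_span
  intro v hv
  rw [Finsupp.support_filter, Finset.mem_filter] at hv
  exact hv.2

lemma isWH_rename {τ : Type*} {g : τ → σ} {w' : σ → ℕ} {w : τ → ℕ}
    (hw : ∀ v, w' (g v) = w v) {f : MvPolynomial τ k} {d : ℕ}
    (hf : IsWeightedHomogeneous w f d) :
    IsWeightedHomogeneous w' (rename g f) d := by
  intro μ hμ
  obtain ⟨ν, rfl, hν⟩ := coeff_rename_ne_zero _ _ _ hμ
  have : Finsupp.weight w' (Finsupp.mapDomain g ν) = Finsupp.weight w ν := by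
    rw [Finsupp.weight_apply, Finsupp.weight_apply,
      Finsupp.sum_mapDomain_index (by simp) (fun b m₁ m₂ => add_smul m₁ m₂ (w' b))]
    exact Finsupp.sum_congr fun v _ => by rw [hw v]
  rw [this]
  exact hf hν

lemma isWH_zero_weight (f : MvPolynomial σ k) :
    IsWeightedHomogeneous (0 : σ → ℕ) f 0 := by
  intro μ _
  simp [Finsupp.weight_apply]

lemma isWH_component {w w' : σ → ℕ} {f : MvPolynomial σ k} {d : ℕ}
    (hf : IsWeightedHomogeneous w f d) (q : ℕ) :
    IsWeightedHomogeneous w (weightedHomogeneousComponent w' q f) d := by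
  classical
  intro μ hμ
  rw [coeff_weightedHomogeneousComponent] at hμ
  split at hμ
  · exact hf hμ
  · exact absurd rfl hμ

end CommRingAux

variable {k : Type*} [Field k] {σ : Type*}

/-! ### Weighted-stability of ideals -/

/-- An ideal is `w`-stable if it contains all weighted homogeneous components
of its elements. -/
def WStable (w : σ → ℕ) (K : Ideal (MvPolynomial σ k)) : Prop :=
  ∀ (d : ℕ) (f : MvPolynomial σ k), f ∈ K → weightedHomogeneousComponent w d f ∈ K

lemma decompose_eq_whc (w : σ → ℕ) (f : MvPolynomial σ k) (d : ℕ) :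
    letI := weightedGradedAlgebra k w
    ((DirectSum.decompose (weightedHomogeneousSubmodule k w) f d : MvPolynomial σ k))
      = weightedHomogeneousComponent w d f := by
  letI := weightedGradedAlgebra k w
  exact MvPolynomial.decompose'_apply k w f d

lemma wstable_iff (w : σ → ℕ) (K : Ideal (MvPolynomial σ k)) :
    letI := weightedGradedAlgebra k w
    (WStable w K ↔ K.IsHomogeneous (weightedHomogeneousSubmodule k w)) := by
  letI := weightedGradedAlgebra k w
  constructor
  · intro h d f hf
    rw [decompose_eq_whc]
    exact h d f hf
  · intro h d f hf
    rw [← decompose_eq_whc (k := k) w f d]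
    exact h d hf

lemma WStable.top (w : σ → ℕ) : WStable w (⊤ : Ideal (MvPolynomial σ k)) :=
  fun _ _ _ => trivial

lemma WStable.mul {w : σ → ℕ} {K L : Ideal (MvPolynomial σ k)}
    (hK : WStable w K) (hL : WStable w L) : WStable w (K * L) := by
  letI := weightedGradedAlgebra k w
  rw [wstable_iff] at hK hL ⊢
  exact Ideal.IsHomogeneous.mul hK hL

lemma WStable.sup {w : σ → ℕ} {K L : Ideal (MvPolynomial σ k)}
    (hK : WStable w K) (hL : WStable w L) : WStable w (K ⊔ L) := by
  letI := weightedGradedAlgebra k w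
  rw [wstable_iff] at hK hL ⊢
  exact Ideal.IsHomogeneous.sup hK hL

lemma WStable.inf {w : σ → ℕ} {K L : Ideal (MvPolynomial σ k)}
    (hK : WStable w K) (hL : WStable w L) : WStable w (K ⊓ L) := by
  letI := weightedGradedAlgebra k w
  rw [wstable_iff] at hK hL ⊢
  exact Ideal.IsHomogeneous.inf hK hL

lemma WStable.pow {w : σ → ℕ} {K : Ideal (MvPolynomial σ k)}
    (hK : WStable w K) (n : ℕ) : WStable w (K ^ n) := by
  induction n with
  | zero => rw [pow_zero, Ideal.one_eq_top]; exact WStable.top w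
  | succ n ih => rw [pow_succ]; exact ih.mul hK

lemma WStable.span {w : σ → ℕ} {S : Set (MvPolynomial σ k)}
    (hS : ∀ g ∈ S, ∃ d, IsWeightedHomogeneous w g d) : WStable w (Ideal.span S) := by
  letI := weightedGradedAlgebra k w
  rw [wstable_iff]
  exact Ideal.homogeneous_span _ S fun x hx =>
    (hS x hx).imp fun d hd => (mem_weightedHomogeneousSubmodule k w d x).mpr hd

/-! ### Ideal power lemmas -/

lemma sup_pow_succ_le {R : Type*} [CommRing R] (A B : Ideal R) (n m : ℕ) :
    (A ⊔ B) ^ (n + m + 1) ≤ A ^ (n + 1) ⊔ B ^ (m + 1) := by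
  rw [← Ideal.add_eq_sup, add_pow, Ideal.sum_eq_sup]
  apply Finset.sup_le
  intro i hi
  simp only [Finset.mem_range] at hi
  by_cases h : n + 1 ≤ i
  · exact Ideal.mul_le_left.trans (Ideal.mul_le_left.trans
      ((Ideal.pow_le_pow_right h).trans le_sup_left))
  · refine Ideal.mul_le_left.trans (Ideal.mul_le_right.trans
      ((Ideal.pow_le_pow_right ?_).trans le_sup_right))
    omega

lemma sup_pow_le_sup_prod {R : Type*} [CommRing R] (A B : Ideal R) (N : ℕ) :
    (A ⊔ B) ^ N ≤ (Finset.range (N + 1)).sup (fun i => A ^ i * B ^ (N - i)) := by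
  rw [← Ideal.add_eq_sup, add_pow, Ideal.sum_eq_sup]
  apply Finset.sup_le
  intro i hi
  exact Ideal.mul_le_left.trans (Finset.le_sup (f := fun i => A ^ i * B ^ (N - i)) hi)

lemma finset_sup_mul_le {R : Type*} [CommRing R] {ι : Type*} (S : Finset ι)
    (f : ι → Ideal R) (U C : Ideal R) (h : ∀ i ∈ S, f i * U ≤ C) : (S.sup f) * U ≤ C := by
  classical
  induction S using Finset.induction with
  | empty => simp
  | @insert a S ha ih =>
      rw [Finset.sup_insert, Ideal.sup_mul]
      exact sup_le (h a (Finset.mem_insert_self a S))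
        (ih fun i hi => h i (Finset.mem_insert_of_mem hi))

/-! ### The coefficient-extraction lemma -/

lemma map_rename_mul_span_pow {υ₁ υ₂ : Type*}
    (e : MvPolynomial σ k ≃ₐ[k] MvPolynomial υ₂ (MvPolynomial υ₁ k))
    (g1 : υ₁ → σ) (g2 : υ₂ → σ)
    (he1 : ∀ r, e (rename g1 r) = C r)
    (he2 : ∀ j, e (X (g2 j)) = X j)
    (K : Ideal (MvPolynomial υ₁ k)) (t : ℕ) {f : MvPolynomial σ k}
    (hf1 : f ∈ Ideal.map (rename g1 : MvPolynomial υ₁ k →ₐ[k] MvPolynomial σ k) K)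
    (hf2 : f ∈ (Ideal.span (X '' Set.range g2) : Ideal (MvPolynomial σ k)) ^ t) :
    f ∈ (Ideal.map (rename g1 : MvPolynomial υ₁ k →ₐ[k] MvPolynomial σ k) K) *
      (Ideal.span (X '' Set.range g2) : Ideal (MvPolynomial σ k)) ^ t := by
  classical
  set eR : MvPolynomial σ k →+* MvPolynomial υ₂ (MvPolynomial υ₁ k) := e.toAlgHom.toRingHom with heR
  set K' : Ideal (MvPolynomial σ k) :=
    Ideal.map (rename g1 : MvPolynomial υ₁ k →ₐ[k] MvPolynomial σ k) K with hK'
  set Nid : Ideal (MvPolynomial σ k) := Ideal.span (X '' Set.range g2) with hNid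
  -- image of K' under e is map C K
  have hmapK : Ideal.map eR K' = Ideal.map
      (C : MvPolynomial υ₁ k →+* MvPolynomial υ₂ (MvPolynomial υ₁ k)) K := by
    apply le_antisymm
    · rw [Ideal.map_le_iff_le_comap, hK', Ideal.map_le_iff_le_comap]
      intro r hr
      have : eR (rename g1 r) ∈ Ideal.map (C : MvPolynomial υ₁ k →+* _) K := by
        have h := he1 r
        show e (rename g1 r) ∈ _
        rw [h]
        exact Ideal.mem_map_of_mem _ hr
      exact this
    · rw [Ideal.map_le_iff_le_comap]
      intro r hr
      show C r ∈ Ideal.map eR K'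
      have h : C r = eR (rename g1 r) := (he1 r).symm
      rw [h]
      exact Ideal.mem_map_of_mem eR (Ideal.mem_map_of_mem _ hr)
  -- image of Nid under e is the span of variables
  have hmapN : Ideal.map eR Nid = Ideal.span (Set.range
      (X : υ₂ → MvPolynomial υ₂ (MvPolynomial υ₁ k))) := by
    rw [hNid, Ideal.map_span]
    apply le_antisymm <;> rw [Ideal.span_le]
    · rintro _ ⟨_, ⟨_, ⟨j, rfl⟩, rfl⟩, rfl⟩
      exact Ideal.subset_span ⟨j, (he2 j).symm⟩
    · rintro _ ⟨j, rfl⟩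
      exact Ideal.subset_span
        ⟨(X (g2 j) : MvPolynomial σ k), ⟨g2 j, ⟨j, rfl⟩, rfl⟩, he2 j⟩
  have hef1 : eR f ∈ Ideal.map (C : MvPolynomial υ₁ k →+* _) K := by
    rw [← hmapK]; exact Ideal.mem_map_of_mem eR hf1
  have hef2 : eR f ∈ (Ideal.span (Set.range (X : υ₂ → MvPolynomial υ₂ (MvPolynomial υ₁ k)))) ^ t := by
    rw [← hmapN, ← Ideal.map_pow]; exact Ideal.mem_map_of_mem eR hf2
  -- in the iterated polynomial ring
  have hkey : eR f ∈ (Ideal.map (C : MvPolynomial υ₁ k →+* _) K) *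
      (Ideal.span (Set.range (X : υ₂ → MvPolynomial υ₂ (MvPolynomial υ₁ k)))) ^ t := by
    nth_rewrite 1 [(eR f).as_sum]
    apply Ideal.sum_mem
    intro m hm
    have hcoeff : coeff m (eR f) ∈ K := MvPolynomial.mem_map_C_iff.mp hef1 m
    have hdeg : t ≤ Finsupp.degree m := by
      have hle := pow_span_le_lowDeg (k := MvPolynomial υ₁ k) (σ := υ₂)
        (s := (Set.univ : Set υ₂)) (w := fun _ => (1 : ℕ)) (fun v _ => le_refl 1) t
      rw [Set.image_univ] at hle
      have := hle hef2 m hm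
      rwa [Finsupp.degree_eq_weight_one]
    have hmono : (monomial m (coeff m (eR f)))
        = C (coeff m (eR f)) * monomial m 1 := by
      rw [C_mul_monomial, mul_one]
    rw [hmono]
    apply Ideal.mul_mem_mul (Ideal.mem_map_of_mem _ hcoeff)
    have hmm := monomial_mem_pow_span (Set.univ : Set υ₂) m (fun v _ => trivial)
      (1 : MvPolynomial υ₁ k)
    rw [Set.image_univ] at hmm
    exact Ideal.pow_le_pow_right hdeg hmm
  -- pull back
  set eS : MvPolynomial υ₂ (MvPolynomial υ₁ k) →+* MvPolynomial σ k := e.symm.toAlgHom.toRingHom with heS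
  have hcancel : ∀ (W : Ideal (MvPolynomial σ k)), Ideal.map eS (Ideal.map eR W) = W := by
    intro W
    rw [Ideal.map_map]
    have : eS.comp eR = RingHom.id _ := RingHom.ext fun x => e.symm_apply_apply x
    rw [heS, heR] at this ⊢
    rw [this, Ideal.map_id]
  have hback := Ideal.mem_map_of_mem eS hkey
  rw [Ideal.map_mul, ← hmapK, hcancel, Ideal.map_pow, ← hmapN, ← Ideal.map_pow, ← Ideal.map_pow, hcancel] at hback
  have : eS (eR f) = f := e.symm_apply_apply f
  rwa [this] at hback

/-! ### weights on a sum type -/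

def wX (a b : ℕ) : Fin a ⊕ Fin b → ℕ := Sum.elim (fun _ => 1) (fun _ => 0)
def wY (a b : ℕ) : Fin a ⊕ Fin b → ℕ := Sum.elim (fun _ => 0) (fun _ => 1)

@[simp] lemma wX_inl {a b : ℕ} (i : Fin a) : wX a b (Sum.inl i) = 1 := rfl
@[simp] lemma wX_inr {a b : ℕ} (j : Fin b) : wX a b (Sum.inr j) = 0 := rfl
@[simp] lemma wY_inl {a b : ℕ} (i : Fin a) : wY a b (Sum.inl i) = 0 := rfl
@[simp] lemma wY_inr {a b : ℕ} (j : Fin b) : wY a b (Sum.inr j) = 1 := rfl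

lemma wX_ind {a b : ℕ} (v : Fin a ⊕ Fin b) :
    wX a b v = if v ∈ Set.range (Sum.inl : Fin a → Fin a ⊕ Fin b) then 1 else 0 := by
  rcases v with x | y
  · rw [if_pos ⟨x, rfl⟩]; rfl
  · rw [if_neg (by rintro ⟨x, h⟩; exact Sum.inl_ne_inr h)]; rfl

lemma wY_ind {a b : ℕ} (v : Fin a ⊕ Fin b) :
    wY a b v = if v ∈ Set.range (Sum.inr : Fin b → Fin a ⊕ Fin b) then 1 else 0 := by
  rcases v with x | y
  · rw [if_neg (by rintro ⟨x, h⟩; exact Sum.inr_ne_inl h)]; rfl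
  · rw [if_pos ⟨y, rfl⟩]; rfl

/-- image of the variables under an extension rename -/
lemma image_rename_range_X {τ : Type*} (g : τ → σ) :
    (⇑(rename g : MvPolynomial τ k →ₐ[k] MvPolynomial σ k) '' Set.range X)
      = X '' Set.range g := by
  ext z
  constructor
  · rintro ⟨_, ⟨i, rfl⟩, rfl⟩
    exact ⟨g i, ⟨i, rfl⟩, (rename_X g i).symm⟩
  · rintro ⟨_, ⟨i, rfl⟩, rfl⟩
    exact ⟨X i, ⟨i, rfl⟩, rename_X g i⟩

/-- decomposition of an extended homogeneous ideal into renamed homogeneous generators -/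
lemma map_eq_span_components {τ : Type*} (g : τ → σ) (K : Ideal (MvPolynomial τ k))
    (hK : ∀ f ∈ K, ∀ d : ℕ, MvPolynomial.homogeneousComponent d f ∈ K) :
    Ideal.map (rename g : MvPolynomial τ k →ₐ[k] MvPolynomial σ k) K
      = Ideal.span ((rename g : MvPolynomial τ k →ₐ[k] MvPolynomial σ k) ''
          {h | ∃ f ∈ K, ∃ d : ℕ, MvPolynomial.homogeneousComponent d f = h}) := by
  have hKcomp : Ideal.span {h | ∃ f ∈ K, ∃ d : ℕ, MvPolynomial.homogeneousComponent d f = h}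
      = K := by
    apply le_antisymm
    · rw [Ideal.span_le]
      rintro _ ⟨f, hf, d, rfl⟩
      exact hK f hf d
    · intro f hf
      rw [← sum_homogeneousComponent f]
      exact Ideal.sum_mem _ fun i _ => Ideal.subset_span ⟨f, hf, i, rfl⟩
  conv_lhs => rw [← hKcomp]
  rw [Ideal.map_span]

end FP19

open FP19

set_option maxHeartbeats 2000000
set_option synthInstance.maxHeartbeats 400000
set_option linter.unusedSectionVars false

theorem pow_fiberProduct_sandwich_finiteLength
    (k : Type*) [Field k] (a b : ℕ) (ha : 0 < a) (hb : 0 < b)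
    (I : Ideal (MvPolynomial (Fin a) k)) (hIm : I ≤ mxI k (Fin a) ^ 2)
    (hIproper : I ≠ ⊤) (hIhom : IsHomogIdeal I)
    (J : Ideal (MvPolynomial (Fin b) k)) (hJn : J ≤ mxI k (Fin b) ^ 2)
    (hJproper : J ≠ ⊤) (hJhom : IsHomogIdeal J)
    (I' J' m' n' : Ideal (MvPolynomial (Fin a ⊕ Fin b) k))
    (hI' : I' = Ideal.map (rename (Sum.inl : Fin a → Fin a ⊕ Fin b) :
      MvPolynomial (Fin a) k →ₐ[k] MvPolynomial (Fin a ⊕ Fin b) k) I)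
    (hJ' : J' = Ideal.map (rename (Sum.inr : Fin b → Fin a ⊕ Fin b) :
      MvPolynomial (Fin b) k →ₐ[k] MvPolynomial (Fin a ⊕ Fin b) k) J)
    (hm' : m' = Ideal.map (rename (Sum.inl : Fin a → Fin a ⊕ Fin b) :
      MvPolynomial (Fin a) k →ₐ[k] MvPolynomial (Fin a ⊕ Fin b) k) (mxI k (Fin a)))
    (hn' : n' = Ideal.map (rename (Sum.inr : Fin b → Fin a ⊕ Fin b) :
      MvPolynomial (Fin b) k →ₐ[k] MvPolynomial (Fin a ⊕ Fin b) k) (mxI k (Fin b)))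
    (F : Ideal (MvPolynomial (Fin a ⊕ Fin b) k)) (hF : F = I' + J' + m' * n')
    (s : ℕ) (hs : 1 ≤ s)
    (U : Ideal (MvPolynomial (Fin a ⊕ Fin b) k))
    (hU : U = (I' + n') ^ s ⊓ (J' + m') ^ s) :
    (m' + n') ^ (2 * s - 1) * U ≤ F ^ s ∧ F ^ s ≤ U ∧
      IsFiniteLength (MvPolynomial (Fin a ⊕ Fin b) k)
        (↥(Submodule.map (Submodule.mkQ (F ^ s : Submodule (MvPolynomial (Fin a ⊕ Fin b) k)
            (MvPolynomial (Fin a ⊕ Fin b) k)))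
          (U : Submodule (MvPolynomial (Fin a ⊕ Fin b) k) (MvPolynomial (Fin a ⊕ Fin b) k)))) := by
  classical
  -- span descriptions of m' and n'
  have hm's : m' = Ideal.span (X '' Set.range (Sum.inl : Fin a → (Fin a ⊕ Fin b))) := by
    rw [hm', mxI, Ideal.map_span, image_rename_range_X]
  have hn's : n' = Ideal.span (X '' Set.range (Sum.inr : Fin b → (Fin a ⊕ Fin b))) := by
    rw [hn', mxI, Ideal.map_span, image_rename_range_X]
  -- basic containments
  have hJ'n : J' ≤ n' := by
    rw [hJ', hn']
    refine le_trans (Ideal.map_mono hJn) ?_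
    rw [Ideal.map_pow]
    exact Ideal.pow_le_self two_ne_zero
  have hI'm : I' ≤ m' := by
    rw [hI', hm']
    refine le_trans (Ideal.map_mono hIm) ?_
    rw [Ideal.map_pow]
    exact Ideal.pow_le_self two_ne_zero
  have hFlen : F ≤ I' ⊔ n' := by
    rw [hF, Ideal.add_eq_sup, Ideal.add_eq_sup]
    exact sup_le (sup_le le_sup_left (hJ'n.trans le_sup_right))
      (Ideal.mul_le_right.trans le_sup_right)
  have hFlem : F ≤ J' ⊔ m' := by
    rw [hF, Ideal.add_eq_sup, Ideal.add_eq_sup]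
    exact sup_le (sup_le (hI'm.trans le_sup_right) le_sup_left)
      ((Ideal.mul_le_left).trans le_sup_right)
  have hI'F : I' ≤ F := by
    rw [hF, Ideal.add_eq_sup, Ideal.add_eq_sup]
    exact le_sup_left.trans le_sup_left
  have hJ'F : J' ≤ F := by
    rw [hF, Ideal.add_eq_sup, Ideal.add_eq_sup]
    exact le_sup_right.trans le_sup_left
  have hmnF : m' * n' ≤ F := by
    rw [hF, Ideal.add_eq_sup, Ideal.add_eq_sup]
    exact le_sup_right
  -- second part : F ^ s ≤ U
  have hFsU : F ^ s ≤ U := by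
    rw [hU, Ideal.add_eq_sup, Ideal.add_eq_sup]
    exact le_inf (Ideal.pow_right_mono hFlen s) (Ideal.pow_right_mono hFlem s)
  -- stability facts
  have hWS_I'X : WStable (wX a b) I' := by
    rw [map_eq_span_components Sum.inl I hIhom] at hI'
    rw [hI']
    apply WStable.span
    rintro _ ⟨h, ⟨f0, hf0, d, rfl⟩, rfl⟩
    exact ⟨d, isWH_rename (fun v => rfl) (homogeneousComponent_isHomogeneous d f0)⟩
  have hWS_I'Y : WStable (wY a b) I' := by
    rw [map_eq_span_components Sum.inl I hIhom] at hI'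
    rw [hI']
    apply WStable.span
    rintro _ ⟨h, -, rfl⟩
    exact ⟨0, isWH_rename (g := Sum.inl) (w' := wY a b) (w := (0 : Fin a → ℕ))
      (fun v => rfl) (isWH_zero_weight h)⟩
  have hWS_J'X : WStable (wX a b) J' := by
    rw [map_eq_span_components Sum.inr J hJhom] at hJ'
    rw [hJ']
    apply WStable.span
    rintro _ ⟨h, -, rfl⟩
    exact ⟨0, isWH_rename (g := Sum.inr) (w' := wX a b) (w := (0 : Fin b → ℕ))
      (fun v => rfl) (isWH_zero_weight h)⟩
  have hWS_J'Y : WStable (wY a b) J' := by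
    rw [map_eq_span_components Sum.inr J hJhom] at hJ'
    rw [hJ']
    apply WStable.span
    rintro _ ⟨h, ⟨f0, hf0, d, rfl⟩, rfl⟩
    exact ⟨d, isWH_rename (fun v => rfl) (homogeneousComponent_isHomogeneous d f0)⟩
  have hWS_m' : ∀ w : (Fin a ⊕ Fin b) → ℕ, WStable w m' := by
    intro w
    rw [hm's]
    apply WStable.span
    rintro _ ⟨_, ⟨i, rfl⟩, rfl⟩
    exact ⟨w (Sum.inl i), isWeightedHomogeneous_X k w (Sum.inl i)⟩
  have hWS_n' : ∀ w : (Fin a ⊕ Fin b) → ℕ, WStable w n' := by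
    intro w
    rw [hn's]
    apply WStable.span
    rintro _ ⟨_, ⟨j, rfl⟩, rfl⟩
    exact ⟨w (Sum.inr j), isWeightedHomogeneous_X k w (Sum.inr j)⟩
  have hWS_UX : WStable (wX a b) U := by
    rw [hU, Ideal.add_eq_sup, Ideal.add_eq_sup]
    exact (((hWS_I'X).sup (hWS_n' _)).pow s).inf (((hWS_J'X).sup (hWS_m' _)).pow s)
  have hWS_UY : WStable (wY a b) U := by
    rw [hU, Ideal.add_eq_sup, Ideal.add_eq_sup]
    exact (((hWS_I'Y).sup (hWS_n' _)).pow s).inf (((hWS_J'Y).sup (hWS_m' _)).pow s)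
  -- the two algebra equivalences
  set eI : MvPolynomial (Fin a ⊕ Fin b) k ≃ₐ[k] MvPolynomial (Fin b) (MvPolynomial (Fin a) k) :=
    (renameEquiv k (Equiv.sumComm (Fin a) (Fin b))).trans (sumAlgEquiv k (Fin b) (Fin a))
    with heI
  have heI1 : ∀ r : MvPolynomial (Fin a) k, eI (rename Sum.inl r) = C r := by
    intro r
    rw [heI]
    show (sumAlgEquiv k (Fin b) (Fin a))
      ((renameEquiv k (Equiv.sumComm (Fin a) (Fin b))) (rename Sum.inl r)) = C r
    rw [renameEquiv_apply, rename_rename]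
    have h1 : (⇑(Equiv.sumComm (Fin a) (Fin b)) ∘ Sum.inl)
        = (Sum.inr : Fin a → Fin b ⊕ Fin a) := rfl
    rw [h1]
    have h2 := congrArg (fun (G : _ →ₐ[k] _) => G r) (sumAlgEquiv_comp_rename_inr k (Fin b) (Fin a))
    simpa using h2
  have heI2 : ∀ j : Fin b, eI (X (Sum.inr j)) = X j := by
    intro j
    rw [heI]
    show (sumAlgEquiv k (Fin b) (Fin a))
      ((renameEquiv k (Equiv.sumComm (Fin a) (Fin b))) (X (Sum.inr j))) = X j
    rw [renameEquiv_apply, rename_X]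
    simp
  set eJ : MvPolynomial (Fin a ⊕ Fin b) k ≃ₐ[k] MvPolynomial (Fin a) (MvPolynomial (Fin b) k) :=
    sumAlgEquiv k (Fin a) (Fin b) with heJ
  have heJ1 : ∀ r : MvPolynomial (Fin b) k, eJ (rename Sum.inr r) = C r := by
    intro r
    have h2 := congrArg (fun (G : _ →ₐ[k] _) => G r) (sumAlgEquiv_comp_rename_inr k (Fin a) (Fin b))
    simpa using h2
  have heJ2 : ∀ i : Fin a, eJ (X (Sum.inl i)) = X i := by
    intro i
    rw [heJ]
    simp
  -- decomposition into weighted homogeneous components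
  have hdec : ∀ (w : (Fin a ⊕ Fin b) → ℕ) (f : MvPolynomial (Fin a ⊕ Fin b) k), ∃ D : Finset ℕ,
      f = ∑ d ∈ D, weightedHomogeneousComponent w d f := by
    intro w f
    have h1 := sum_weightedHomogeneousComponent w f
    rw [finsum_eq_sum _ (weightedHomogeneousComponent_finsupp f)] at h1
    exact ⟨_, h1.symm⟩
  set N := 2 * s - 1 with hN
  -- the elementwise core
  have hcore : ∀ f : MvPolynomial (Fin a ⊕ Fin b) k, f ∈ U → ∀ pp qq : ℕ, IsWeightedHomogeneous (wX a b) f pp →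
      IsWeightedHomogeneous (wY a b) f qq → ∀ i j : ℕ, i + j = N →
      ∀ u ∈ m' ^ i, ∀ v ∈ n' ^ j, u * (v * f) ∈ F ^ s := by
    intro f hfU pp qq hX hY i j hij u hu v hv
    have hfU1 : f ∈ (I' ⊔ n') ^ s := by
      rw [hU, Ideal.add_eq_sup, Ideal.add_eq_sup] at hfU
      exact (Submodule.mem_inf.mp hfU).1
    have hfU2 : f ∈ (J' ⊔ m') ^ s := by
      rw [hU, Ideal.add_eq_sup, Ideal.add_eq_sup] at hfU
      exact (Submodule.mem_inf.mp hfU).2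
    rcases (show s ≤ (s - qq) + i ∨ s ≤ (s - pp) + j by omega) with hc | hc
    · -- use the I' side
      set c := s - qq with hcdef
      set t := s - c with htdef
      have hcle : c ≤ s := Nat.sub_le _ _
      have htq : t ≤ qq := by omega
      have hti : t ≤ i := by omega
      have hct : c + t = s := by omega
      have hfI : f ∈ I' ^ c := by
        rcases Nat.eq_zero_or_pos c with h0 | hcpos
        · rw [h0, pow_zero, Ideal.one_eq_top]; trivial
        · have hqs : qq < s := by omega
          have hstep : (I' ⊔ n') ^ s ≤ I' ^ c ⊔ n' ^ (qq + 1) := by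
            have h := sup_pow_succ_le I' n' (c - 1) qq
            have e1 : c - 1 + 1 = c := by omega
            have e2 : c - 1 + qq + 1 = s := by omega
            rw [e1, e2] at h
            exact h
          obtain ⟨g, hg, h, hh, hgh⟩ := Submodule.mem_sup.mp (hstep hfU1)
          have hYg : weightedHomogeneousComponent (wY a b) qq g ∈ I' ^ c :=
            (hWS_I'Y.pow c) qq g hg
          have hYh : weightedHomogeneousComponent (wY a b) qq h = 0 := by
            apply weightedHomogeneousComponent_eq_zero'
            intro μ hμ
            have hle2 : n' ^ (qq + 1) ≤ lowDeg (wY a b) (qq + 1) := by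
              rw [hn's]
              exact pow_span_le_lowDeg (by rintro _ ⟨j0, rfl⟩; simp) (qq + 1)
            have hw := hle2 hh μ hμ
            omega
          have hfeq : f = weightedHomogeneousComponent (wY a b) qq g := by
            rw [← hY.weightedHomogeneousComponent_same, ← hgh, map_add, hYh, add_zero]
          rw [hfeq]
          exact hYg
      have hfn : f ∈ n' ^ t := by
        have h0 : f ∈ (Ideal.span (X '' Set.range (Sum.inr : Fin b → (Fin a ⊕ Fin b)))) ^ qq :=
          isWH_mem_pow_span (wY a b) (Set.range Sum.inr) wY_ind hY
        rw [← hn's] at h0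
        exact Ideal.pow_le_pow_right htq h0
      have hlem : f ∈ I' ^ c * n' ^ t := by
        rw [hI', ← Ideal.map_pow, hn's]
        rw [hI', ← Ideal.map_pow] at hfI
        rw [hn's] at hfn
        exact map_rename_mul_span_pow eI Sum.inl Sum.inr heI1 heI2 (I ^ c) t hfI hfn
      have hu' : u ∈ m' ^ t := Ideal.pow_le_pow_right hti hu
      have hmem : u * (v * f) ∈ m' ^ t * (I' ^ c * n' ^ t) :=
        Ideal.mul_mem_mul hu' (Ideal.mul_mem_left _ v hlem)
      have hle : m' ^ t * (I' ^ c * n' ^ t) ≤ F ^ s := by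
        have heq : m' ^ t * (I' ^ c * n' ^ t) = I' ^ c * (m' * n') ^ t := by ring
        rw [heq, ← hct, pow_add]
        exact Ideal.mul_mono (Ideal.pow_right_mono hI'F c) (Ideal.pow_right_mono hmnF t)
      exact hle hmem
    · -- use the J' side
      set c := s - pp with hcdef
      set t := s - c with htdef
      have hcle : c ≤ s := Nat.sub_le _ _
      have htp : t ≤ pp := by omega
      have htj : t ≤ j := by omega
      have hct : c + t = s := by omega
      have hfJ : f ∈ J' ^ c := by
        rcases Nat.eq_zero_or_pos c with h0 | hcpos
        · rw [h0, pow_zero, Ideal.one_eq_top]; trivial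
        · have hps : pp < s := by omega
          have hstep : (J' ⊔ m') ^ s ≤ J' ^ c ⊔ m' ^ (pp + 1) := by
            have h := sup_pow_succ_le J' m' (c - 1) pp
            have e1 : c - 1 + 1 = c := by omega
            have e2 : c - 1 + pp + 1 = s := by omega
            rw [e1, e2] at h
            exact h
          obtain ⟨g, hg, h, hh, hgh⟩ := Submodule.mem_sup.mp (hstep hfU2)
          have hXg : weightedHomogeneousComponent (wX a b) pp g ∈ J' ^ c :=
            (hWS_J'X.pow c) pp g hg
          have hXh : weightedHomogeneousComponent (wX a b) pp h = 0 := by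
            apply weightedHomogeneousComponent_eq_zero'
            intro μ hμ
            have hle2 : m' ^ (pp + 1) ≤ lowDeg (wX a b) (pp + 1) := by
              rw [hm's]
              exact pow_span_le_lowDeg (by rintro _ ⟨i0, rfl⟩; simp) (pp + 1)
            have hw := hle2 hh μ hμ
            omega
          have hfeq : f = weightedHomogeneousComponent (wX a b) pp g := by
            rw [← hX.weightedHomogeneousComponent_same, ← hgh, map_add, hXh, add_zero]
          rw [hfeq]
          exact hXg
      have hfm : f ∈ m' ^ t := by
        have h0 : f ∈ (Ideal.span (X '' Set.range (Sum.inl : Fin a → (Fin a ⊕ Fin b)))) ^ pp :=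
          isWH_mem_pow_span (wX a b) (Set.range Sum.inl) wX_ind hX
        rw [← hm's] at h0
        exact Ideal.pow_le_pow_right htp h0
      have hlem : f ∈ J' ^ c * m' ^ t := by
        rw [hJ', ← Ideal.map_pow, hm's]
        rw [hJ', ← Ideal.map_pow] at hfJ
        rw [hm's] at hfm
        exact map_rename_mul_span_pow eJ Sum.inr Sum.inl heJ1 heJ2 (J ^ c) t hfJ hfm
      have hv' : v ∈ n' ^ t := Ideal.pow_le_pow_right htj hv
      have hmem : u * (v * f) ∈ n' ^ t * (J' ^ c * m' ^ t) := by
        rw [mul_left_comm u v f]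
        exact Ideal.mul_mem_mul hv' (Ideal.mul_mem_left _ u hlem)
      have hle : n' ^ t * (J' ^ c * m' ^ t) ≤ F ^ s := by
        have heq : n' ^ t * (J' ^ c * m' ^ t) = J' ^ c * (m' * n') ^ t := by ring
        rw [heq, ← hct, pow_add]
        exact Ideal.mul_mono (Ideal.pow_right_mono hJ'F c) (Ideal.pow_right_mono hmnF t)
      exact hle hmem
  -- the main inclusion
  have hmain : (m' ⊔ n') ^ N * U ≤ F ^ s := by
    refine le_trans (Ideal.mul_mono (sup_pow_le_sup_prod m' n' N) le_rfl) ?_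
    apply finset_sup_mul_le
    intro i hi
    rw [Finset.mem_range] at hi
    rw [mul_assoc, Ideal.mul_le]
    intro u hu z hz
    refine Submodule.mul_induction_on hz (fun v hv f hfU => ?_)
      (fun x y hx hy => by rw [mul_add]; exact add_mem hx hy)
    obtain ⟨DX, hDX⟩ := hdec (wX a b) f
    rw [hDX, Finset.mul_sum, Finset.mul_sum]
    apply Ideal.sum_mem
    intro p hp
    set g := weightedHomogeneousComponent (wX a b) p f with hg
    have hgU : g ∈ U := hWS_UX p f hfU
    have hgX : IsWeightedHomogeneous (wX a b) g p :=
      weightedHomogeneousComponent_isWeightedHomogeneous p f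
    obtain ⟨DY, hDY⟩ := hdec (wY a b) g
    rw [hDY, Finset.mul_sum, Finset.mul_sum]
    apply Ideal.sum_mem
    intro q hq
    exact hcore _ (hWS_UY q g hgU) p q (isWH_component hgX q)
      (weightedHomogeneousComponent_isWeightedHomogeneous q g) i (N - i) (by omega) u hu v hv
  refine ⟨by rw [Ideal.add_eq_sup]; exact hmain, hFsU, ?_⟩
  -- finite length
  set π := Submodule.mkQ (F ^ s : Submodule (MvPolynomial (Fin a ⊕ Fin b) k) (MvPolynomial (Fin a ⊕ Fin b) k)) with hπ
  set M := Submodule.map π (U : Submodule (MvPolynomial (Fin a ⊕ Fin b) k) (MvPolynomial (Fin a ⊕ Fin b) k)) with hM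
  -- the quotient kills everything of high degree times U
  have hkill : ∀ (μ : (Fin a ⊕ Fin b) →₀ ℕ) (g : MvPolynomial (Fin a ⊕ Fin b) k), g ∈ U → N ≤ Finsupp.degree μ →
      π (monomial μ 1 * g) = 0 := by
    intro μ g hgU hdeg
    have h1 : (monomial μ 1 : MvPolynomial (Fin a ⊕ Fin b) k) ∈ (m' ⊔ n') ^ N := by
      have hsup : m' ⊔ n' = Ideal.span (X '' (Set.univ : Set (Fin a ⊕ Fin b))) := by
        have huniv : (Set.range (Sum.inl : Fin a → Fin a ⊕ Fin b) ∪ Set.range Sum.inr)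
            = Set.univ :=
          Set.eq_univ_of_forall (fun v => by
            rcases v with x | y
            exacts [Or.inl ⟨x, rfl⟩, Or.inr ⟨y, rfl⟩])
        rw [hm's, hn's, ← Ideal.span_union, ← Set.image_union, huniv]
      rw [hsup]
      have h2 := monomial_mem_pow_span (Set.univ : Set (Fin a ⊕ Fin b)) μ (fun v _ => trivial) (1 : k)
      exact Ideal.pow_le_pow_right hdeg h2
    have h3 : monomial μ 1 * g ∈ F ^ s := hmain (Ideal.mul_mem_mul h1 hgU)
    rw [hπ, Submodule.mkQ_apply, Submodule.Quotient.mk_eq_zero]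
    exact h3
  -- finite generation of U
  obtain ⟨G, hG⟩ : (U : Submodule (MvPolynomial (Fin a ⊕ Fin b) k) (MvPolynomial (Fin a ⊕ Fin b) k)).FG := IsNoetherian.noetherian _
  -- finite spanning set over k
  set Dset : Set ((Fin a ⊕ Fin b) →₀ ℕ) := {μ | Finsupp.weight (1 : (Fin a ⊕ Fin b) → ℕ) μ ≤ N}
    with hDset
  have hDfin : Dset.Finite :=
    Finsupp.finite_of_nat_weight_le _ (fun _ => one_ne_zero) N
  set A : Set (MvPolynomial (Fin a ⊕ Fin b) k ⧸ (F ^ s :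
      Submodule (MvPolynomial (Fin a ⊕ Fin b) k) (MvPolynomial (Fin a ⊕ Fin b) k))) :=
    (fun pr : ((Fin a ⊕ Fin b) →₀ ℕ) × MvPolynomial (Fin a ⊕ Fin b) k =>
      π (monomial pr.1 1 * pr.2)) '' (Dset ×ˢ (↑G : Set (MvPolynomial (Fin a ⊕ Fin b) k)))
    with hA
  have hAfin : A.Finite := Set.Finite.image _ (hDfin.prod G.finite_toSet)
  have hMle : ∀ x ∈ M, x ∈ Submodule.span k A := by
    intro x hx
    obtain ⟨u0, hu0, rfl⟩ := hx
    rw [← hG] at hu0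
    obtain ⟨coef, -, hcoef⟩ := Submodule.mem_span_finset.mp hu0
    rw [← hcoef, map_sum]
    apply Submodule.sum_mem
    intro g hgG
    have hgU : g ∈ U := by rw [← hG]; exact Submodule.subset_span hgG
    rw [smul_eq_mul]
    nth_rewrite 1 [(coef g).as_sum]
    rw [Finset.sum_mul, map_sum]
    apply Submodule.sum_mem
    intro μ hμ
    have hrw : (monomial μ (coeff μ (coef g)) : MvPolynomial (Fin a ⊕ Fin b) k) * g
        = coeff μ (coef g) • (monomial μ 1 * g) := by
      rw [MvPolynomial.smul_eq_C_mul, ← mul_assoc, C_mul_monomial, mul_one]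
    rw [hrw, MvPolynomial.smul_eq_C_mul, ← smul_eq_mul, map_smul,
      ← MvPolynomial.algebraMap_eq, algebraMap_smul]
    by_cases hdeg : Finsupp.degree μ ≤ N
    · apply Submodule.smul_mem
      apply Submodule.subset_span
      refine ⟨(μ, g), ⟨?_, hgG⟩, rfl⟩
      rw [Finsupp.degree_eq_weight_one] at hdeg
      exact hdeg
    · rw [hkill μ g hgU (by omega), smul_zero]
      exact Submodule.zero_mem _
  have hFD : FiniteDimensional k ↥(Submodule.span k A) := FiniteDimensional.span_of_finite k hAfin
  haveI hNsp : IsNoetherian k ↥(Submodule.span k A) := IsNoetherian.iff_fg.mpr hFD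
  haveI hAsp : IsArtinian k ↥(Submodule.span k A) := inferInstance
  let φ : ↥M →ₗ[k] ↥(Submodule.span k A) :=
    { toFun := fun x => ⟨x.1, hMle x.1 x.2⟩
      map_add' := fun x y => rfl
      map_smul' := fun c x => rfl }
  have hinj : Function.Injective φ := by
    intro x y h
    rw [Subtype.ext_iff] at h ⊢
    exact h
  haveI hn1 : IsNoetherian k ↥M := isNoetherian_of_injective φ hinj
  haveI ha1 : IsArtinian k ↥M := isArtinian_of_injective φ hinj
  rw [isFiniteLength_iff_isNoetherian_isArtinian]
  exact ⟨isNoetherian_of_tower k hn1, isArtinian_of_tower k ha1⟩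

end
end
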